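/- arXiv:math/0312237 — 3 statements merged into one kernel-verified Lean document; each statement's English description precedes it below -/
import Mathlib

section
/- Let P be a graded poset whose rank levels {x ∈ P : l(x) = k} are finite for every k, and let A be an order ideal of P. Then every partial special matching defined on A extends to a maximal partial special matching of P. Moreover, if the coatom map x ↦ coat(x) is injective on P \ A, this maximal extension is unique. -/
section PosetPre

variable {α : Type*} [PartialOrder α]

/-- The set of coatoms of `y`: the elements covered by `y`. -/
def coatoms (y : α) : Set α := {x | x ⋖ y}

/-- An order ideal (downward-closed subset). -/
def IsIdeal (Q : Set α) : Prop := ∀ ⦃x y : α⦄, y ∈ Q → x ≤ y → x ∈ Q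

/-- A partial special matching of a poset `α`: an order ideal `dom` together with an
involution of it such that `u ⋖ φ u` or `φ u ⋖ u` for all `u ∈ dom`, satisfying the
coatom condition `coat(φ u) = {u} ∪ {φ v : v ⋖ u, v ⋖ φ v}` whenever `u ⋖ φ u`. -/
structure PSM (α : Type*) [PartialOrder α] where
  dom : Set α
  toFun : α → α
  ideal : IsIdeal dom
  maps : ∀ x ∈ dom, toFun x ∈ dom
  invol : ∀ x ∈ dom, toFun (toFun x) = x
  cov : ∀ x ∈ dom, toFun x ⋖ x ∨ x ⋖ toFun x
  coatom : ∀ u ∈ dom, u ⋖ toFun u →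
    coatoms (toFun u) = {u} ∪ {w | ∃ v, v ⋖ u ∧ v ⋖ toFun v ∧ w = toFun v}

/-- `ψ` extends the partial special matching `φ`. -/
def PExtends (ψ φ : PSM α) : Prop :=
  φ.dom ⊆ ψ.dom ∧ ∀ x ∈ φ.dom, ψ.toFun x = φ.toFun x

end PosetPre

section Aux

open scoped Classical

variable {α : Type*} [PartialOrder α]

lemma pextends_refl (φ : PSM α) : PExtends φ φ := ⟨subset_rfl, fun _ _ => rfl⟩

lemma pextends_trans {χ ψ φ : PSM α} (h1 : PExtends χ ψ) (h2 : PExtends ψ φ) :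
    PExtends χ φ :=
  ⟨h2.1.trans h1.1, fun x hx => (h1.2 x (h2.1 hx)).trans (h2.2 x hx)⟩

/-- Two extensions of `φ` agree on the intersection of their domains, provided coatoms
are injective outside `φ.dom` and the poset is graded. -/
lemma psm_agree (l : α → ℕ) (hgraded : ∀ x y : α, x ⋖ y → l y = l x + 1)
    (φ ψ₁ ψ₂ : PSM α) (h1 : PExtends ψ₁ φ) (h2 : PExtends ψ₂ φ)
    (hinj : Set.InjOn coatoms φ.domᶜ) :
    ∀ x, x ∈ ψ₁.dom → x ∈ ψ₂.dom → ψ₁.toFun x = ψ₂.toFun x := by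
  suffices H : ∀ n : ℕ, ∀ x, l x = n → x ∈ ψ₁.dom → x ∈ ψ₂.dom →
      ψ₁.toFun x = ψ₂.toFun x by
    intro x hx1 hx2; exact H (l x) x rfl hx1 hx2
  intro n
  induction n using Nat.strong_induction_on with
  | _ n IH =>
    intro x hlx hx1 hx2
    by_cases hA : x ∈ φ.dom
    · rw [h1.2 x hA, h2.2 x hA]
    rcases ψ₁.cov x hx1 with c1 | c1
    · -- ψ₁ x ⋖ x; show ψ₂ x = ψ₁ x via involution and IH at u := ψ₁ x
      set u := ψ₁.toFun x with hu
      have hu1 : u ∈ ψ₁.dom := ψ₁.maps x hx1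
      have hu2 : u ∈ ψ₂.dom := ψ₂.ideal hx2 c1.le
      have hlu : l u < n := by
        have := hgraded u x c1; omega
      have key : ψ₂.toFun u = x := by
        have := IH (l u) hlu u rfl hu1 hu2
        rw [← this, hu, ψ₁.invol x hx1]
      have : ψ₂.toFun x = u := by
        conv_lhs => rw [← key]
        exact ψ₂.invol u hu2
      rw [this]
    · rcases ψ₂.cov x hx2 with c2 | c2
      · -- ψ₂ x ⋖ x, x ⋖ ψ₁ x : contradiction
        set u := ψ₂.toFun x with hu
        have hu2 : u ∈ ψ₂.dom := ψ₂.maps x hx2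
        have hu1 : u ∈ ψ₁.dom := ψ₁.ideal hx1 c2.le
        have hlu : l u < n := by
          have := hgraded u x c2; omega
        have key : ψ₁.toFun u = x := by
          have := IH (l u) hlu u rfl hu1 hu2
          rw [this, hu, ψ₂.invol x hx2]
        have h₁ : ψ₁.toFun x = u := by
          conv_lhs => rw [← key]
          exact ψ₁.invol u hu1
        exfalso
        exact absurd (h₁ ▸ c1).lt (not_lt_of_gt c2.lt)
      · -- both up: use coatom condition and injectivity
        have hset : {w | ∃ v, v ⋖ x ∧ v ⋖ ψ₁.toFun v ∧ w = ψ₁.toFun v} =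
            {w | ∃ v, v ⋖ x ∧ v ⋖ ψ₂.toFun v ∧ w = ψ₂.toFun v} := by
          ext w
          constructor
          · rintro ⟨v, hv, hv2, rfl⟩
            have hvd1 : v ∈ ψ₁.dom := ψ₁.ideal hx1 hv.le
            have hvd2 : v ∈ ψ₂.dom := ψ₂.ideal hx2 hv.le
            have hlv : l v < n := by have := hgraded v x hv; omega
            have heq := IH (l v) hlv v rfl hvd1 hvd2
            exact ⟨v, hv, heq ▸ hv2, heq⟩
          · rintro ⟨v, hv, hv2, rfl⟩
            have hvd1 : v ∈ ψ₁.dom := ψ₁.ideal hx1 hv.le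
            have hvd2 : v ∈ ψ₂.dom := ψ₂.ideal hx2 hv.le
            have hlv : l v < n := by have := hgraded v x hv; omega
            have heq := IH (l v) hlv v rfl hvd1 hvd2
            exact ⟨v, hv, heq ▸ hv2, heq.symm⟩
        have hco : coatoms (ψ₁.toFun x) = coatoms (ψ₂.toFun x) := by
          rw [ψ₁.coatom x hx1 c1, ψ₂.coatom x hx2 c2, hset]
        have hn1 : ψ₁.toFun x ∈ φ.domᶜ := fun hmem => hA (φ.ideal hmem c1.le)
        have hn2 : ψ₂.toFun x ∈ φ.domᶜ := fun hmem => hA (φ.ideal hmem c2.le)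
        exact hinj hn1 hn2 hco

/-- The merge of two extensions agreeing on the intersection of domains. -/
noncomputable def PSM.merge (ψ₁ ψ₂ : PSM α)
    (hag : ∀ x, x ∈ ψ₁.dom → x ∈ ψ₂.dom → ψ₁.toFun x = ψ₂.toFun x) : PSM α where
  dom := ψ₁.dom ∪ ψ₂.dom
  toFun x := if x ∈ ψ₁.dom then ψ₁.toFun x else if x ∈ ψ₂.dom then ψ₂.toFun x else x
  ideal := by
    rintro x y (hy | hy) hxy
    · exact Or.inl (ψ₁.ideal hy hxy)
    · exact Or.inr (ψ₂.ideal hy hxy)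
  maps := by
    intro x hx
    by_cases h1 : x ∈ ψ₁.dom
    · simp only [if_pos h1]; exact Or.inl (ψ₁.maps x h1)
    · have hx2 : x ∈ ψ₂.dom := hx.resolve_left h1
      simp only [if_neg h1, if_pos hx2]; exact Or.inr (ψ₂.maps x hx2)
  invol := by
    intro x hx
    by_cases h1 : x ∈ ψ₁.dom
    · simp only [if_pos h1, if_pos (ψ₁.maps x h1)]
      exact ψ₁.invol x h1
    · have hx2 : x ∈ ψ₂.dom := hx.resolve_left h1
      simp only [if_neg h1, if_pos hx2]
      have hm := ψ₂.maps x hx2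
      by_cases h2 : ψ₂.toFun x ∈ ψ₁.dom
      · simp only [if_pos h2]
        rw [hag _ h2 hm, ψ₂.invol x hx2]
      · simp only [if_neg h2, if_pos hm]
        exact ψ₂.invol x hx2
  cov := by
    intro x hx
    by_cases h1 : x ∈ ψ₁.dom
    · simp only [if_pos h1]; exact ψ₁.cov x h1
    · have hx2 : x ∈ ψ₂.dom := hx.resolve_left h1
      simp only [if_neg h1, if_pos hx2]; exact ψ₂.cov x hx2
  coatom := by
    intro u hu hcov
    rcases hu with hu | hu
    · -- u ∈ ψ₁.dom: on everything ≤ u, merge = ψ₁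
      have e1 : ∀ v, v ≤ u →
          (if v ∈ ψ₁.dom then ψ₁.toFun v else if v ∈ ψ₂.dom then ψ₂.toFun v else v)
            = ψ₁.toFun v := by
        intro v hv
        have : v ∈ ψ₁.dom := ψ₁.ideal hu hv
        simp [this]
      simp only [e1 u le_rfl] at hcov ⊢
      rw [ψ₁.coatom u hu hcov]
      congr 1
      ext w
      constructor
      · rintro ⟨v, hv, hv2, rfl⟩
        refine ⟨v, hv, ?_, (e1 v hv.le).symm⟩
        rw [e1 v hv.le]; exact hv2
      · rintro ⟨v, hv, hv2, rfl⟩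
        refine ⟨v, hv, ?_, e1 v hv.le⟩
        rwa [e1 v hv.le] at hv2
    · -- u ∈ ψ₂.dom: on everything ≤ u, merge = ψ₂ (using agreement)
      have e2 : ∀ v, v ≤ u →
          (if v ∈ ψ₁.dom then ψ₁.toFun v else if v ∈ ψ₂.dom then ψ₂.toFun v else v)
            = ψ₂.toFun v := by
        intro v hv
        have hv2 : v ∈ ψ₂.dom := ψ₂.ideal hu hv
        by_cases h1 : v ∈ ψ₁.dom
        · simp only [if_pos h1]; exact hag v h1 hv2
        · simp [h1, hv2]
      simp only [e2 u le_rfl] at hcov ⊢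
      rw [ψ₂.coatom u hu hcov]
      congr 1
      ext w
      constructor
      · rintro ⟨v, hv, hv2, rfl⟩
        refine ⟨v, hv, ?_, (e2 v hv.le).symm⟩
        rw [e2 v hv.le]; exact hv2
      · rintro ⟨v, hv, hv2, rfl⟩
        refine ⟨v, hv, ?_, e2 v hv.le⟩
        rwa [e2 v hv.le] at hv2

lemma PSM.merge_dom (ψ₁ ψ₂ : PSM α)
    (hag : ∀ x, x ∈ ψ₁.dom → x ∈ ψ₂.dom → ψ₁.toFun x = ψ₂.toFun x) :
    (PSM.merge ψ₁ ψ₂ hag).dom = ψ₁.dom ∪ ψ₂.dom := rfl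

lemma PSM.merge_extends_left (ψ₁ ψ₂ : PSM α)
    (hag : ∀ x, x ∈ ψ₁.dom → x ∈ ψ₂.dom → ψ₁.toFun x = ψ₂.toFun x) :
    PExtends (PSM.merge ψ₁ ψ₂ hag) ψ₁ := by
  refine ⟨fun x hx => Or.inl hx, fun x hx => ?_⟩
  show (if x ∈ ψ₁.dom then ψ₁.toFun x else if x ∈ ψ₂.dom then ψ₂.toFun x else x)
    = ψ₁.toFun x
  simp [hx]

lemma PSM.merge_extends_right (ψ₁ ψ₂ : PSM α)
    (hag : ∀ x, x ∈ ψ₁.dom → x ∈ ψ₂.dom → ψ₁.toFun x = ψ₂.toFun x) :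
    PExtends (PSM.merge ψ₁ ψ₂ hag) ψ₂ := by
  refine ⟨fun x hx => Or.inr hx, fun x hx => ?_⟩
  show (if x ∈ ψ₁.dom then ψ₁.toFun x else if x ∈ ψ₂.dom then ψ₂.toFun x else x)
    = ψ₂.toFun x
  by_cases h1 : x ∈ ψ₁.dom
  · simp only [if_pos h1]; exact hag x h1 hx
  · simp [h1, hx]

/-- Every partial special matching extends to a maximal one (Zorn's lemma). -/
lemma psm_exists_maximal (φ : PSM α) :
    ∃ ψ : PSM α, PExtends ψ φ ∧ ∀ χ : PSM α, PExtends χ ψ → χ.dom = ψ.dom := by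
  classical
  set r : {ψ : PSM α // PExtends ψ φ} → {ψ : PSM α // PExtends ψ φ} → Prop :=
    fun a b => PExtends b.1 a.1 with hr
  have hzorn : ∃ m, ∀ a, r m a → r a m := by
    apply exists_maximal_of_chains_bounded (r := r)
    · intro c hc
      set c' : Set {ψ : PSM α // PExtends ψ φ} := insert ⟨φ, pextends_refl φ⟩ c with hc'
      have hchain' : IsChain r c' := hc.insert fun b _ _ => Or.inl b.2
      set F : α → α := fun x =>
        if h : ∃ ψ ∈ c', x ∈ (ψ : {ψ : PSM α // PExtends ψ φ}).1.dom
        then h.choose.1.toFun x else x with hF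
      have hFeq : ∀ ψ ∈ c', ∀ x ∈ (ψ : {ψ : PSM α // PExtends ψ φ}).1.dom,
          F x = ψ.1.toFun x := by
        intro ψ hψ x hx
        have hex : ∃ χ ∈ c', x ∈ (χ : {ψ : PSM α // PExtends ψ φ}).1.dom := ⟨ψ, hψ, hx⟩
        simp only [hF, dif_pos hex]
        rcases eq_or_ne hex.choose ψ with h | h
        · rw [h]
        · rcases hchain' hex.choose_spec.1 hψ h with h' | h'
          · exact (h'.2 x hex.choose_spec.2).symm
          · exact h'.2 x hx
      set U : PSM α := {
        dom := ⋃ ψ ∈ c', (ψ : {ψ : PSM α // PExtends ψ φ}).1.dom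
        toFun := F
        ideal := by
          intro x y hy hxy
          simp only [Set.mem_iUnion] at hy ⊢
          obtain ⟨ψ, hψ, hyd⟩ := hy
          exact ⟨ψ, hψ, ψ.1.ideal hyd hxy⟩
        maps := by
          intro x hx
          simp only [Set.mem_iUnion] at hx ⊢
          obtain ⟨ψ, hψ, hxd⟩ := hx
          rw [hFeq ψ hψ x hxd]
          exact ⟨ψ, hψ, ψ.1.maps x hxd⟩
        invol := by
          intro x hx
          simp only [Set.mem_iUnion] at hx
          obtain ⟨ψ, hψ, hxd⟩ := hx
          rw [hFeq ψ hψ x hxd, hFeq ψ hψ _ (ψ.1.maps x hxd)]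
          exact ψ.1.invol x hxd
        cov := by
          intro x hx
          simp only [Set.mem_iUnion] at hx
          obtain ⟨ψ, hψ, hxd⟩ := hx
          rw [hFeq ψ hψ x hxd]
          exact ψ.1.cov x hxd
        coatom := by
          intro u hu hcov
          simp only [Set.mem_iUnion] at hu
          obtain ⟨ψ, hψ, hud⟩ := hu
          rw [hFeq ψ hψ u hud] at hcov ⊢
          rw [ψ.1.coatom u hud hcov]
          congr 1
          ext w
          constructor
          · rintro ⟨v, hv, hv2, rfl⟩
            have hvd : v ∈ ψ.1.dom := ψ.1.ideal hud hv.le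
            refine ⟨v, hv, ?_, (hFeq ψ hψ v hvd).symm⟩
            rw [hFeq ψ hψ v hvd]; exact hv2
          · rintro ⟨v, hv, hv2, rfl⟩
            have hvd : v ∈ ψ.1.dom := ψ.1.ideal hud hv.le
            refine ⟨v, hv, ?_, hFeq ψ hψ v hvd⟩
            rwa [hFeq ψ hψ v hvd] at hv2
      } with hU
      have hUext : ∀ ψ ∈ c', PExtends U (ψ : {ψ : PSM α // PExtends ψ φ}).1 := by
        intro ψ hψ
        refine ⟨fun x hx => ?_, fun x hx => hFeq ψ hψ x hx⟩
        show x ∈ ⋃ ψ ∈ c', (ψ : {ψ : PSM α // PExtends ψ φ}).1.dom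
        simp only [Set.mem_iUnion]
        exact ⟨ψ, hψ, hx⟩
      have hUφ : PExtends U φ := hUext ⟨φ, pextends_refl φ⟩ (Set.mem_insert _ _)
      exact ⟨⟨U, hUφ⟩, fun a ha => hUext a (Set.mem_insert_of_mem _ ha)⟩
    · intro a b c hab hbc
      exact pextends_trans hbc hab
  obtain ⟨m, hm⟩ := hzorn
  refine ⟨m.1, m.2, fun χ hχ => ?_⟩
  have hχφ : PExtends χ φ := pextends_trans hχ m.2
  have := hm ⟨χ, hχφ⟩ hχ
  exact Set.Subset.antisymm this.1 hχ.1

end Aux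

/-- in a graded poset with finite rank levels, every partial special
matching with domain an order ideal `A` extends to a maximal one; if the coatom map is
injective on the complement of `A`, the maximal extension is unique. -/
theorem stmt1 {α : Type*} [PartialOrder α] (l : α → ℕ)
    (hgraded : ∀ x y : α, x ⋖ y → l y = l x + 1)
    (hlevels : ∀ k : ℕ, {x : α | l x = k}.Finite)
    (A : Set α) (φ : PSM α) (hdom : φ.dom = A) :
    (∃ ψ : PSM α, PExtends ψ φ ∧ ∀ χ : PSM α, PExtends χ ψ → χ.dom = ψ.dom) ∧
      (Set.InjOn coatoms Aᶜ →
        ∀ ψ₁ ψ₂ : PSM α,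
          PExtends ψ₁ φ → (∀ χ : PSM α, PExtends χ ψ₁ → χ.dom = ψ₁.dom) →
          PExtends ψ₂ φ → (∀ χ : PSM α, PExtends χ ψ₂ → χ.dom = ψ₂.dom) →
          ψ₁.dom = ψ₂.dom ∧ ∀ x ∈ ψ₁.dom, ψ₁.toFun x = ψ₂.toFun x) := by
  refine ⟨psm_exists_maximal φ, ?_⟩
  intro hinj ψ₁ ψ₂ h1 hmax1 h2 hmax2
  rw [← hdom] at hinj
  have hag := psm_agree l hgraded φ ψ₁ ψ₂ h1 h2 hinj
  have hd1 : (PSM.merge ψ₁ ψ₂ hag).dom = ψ₁.dom :=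
    hmax1 _ (PSM.merge_extends_left ψ₁ ψ₂ hag)
  have hd2 : (PSM.merge ψ₁ ψ₂ hag).dom = ψ₂.dom :=
    hmax2 _ (PSM.merge_extends_right ψ₁ ψ₂ hag)
  refine ⟨hd1 ▸ hd2, fun x hx => hag x hx ?_⟩
  rw [← hd2, hd1]; exact hx
end

section
/- Let (W, S) be a Coxeter system, J ⊆ S, and w ∈ W full with respect to J (i.e. for all s, t ∈ J, m_{st} < ∞ and the longest element M_{st} of ⟨s,t⟩ satisfies M_{st} ≤ w in Bruhat order). Then there exists v ∈ ⟨J⟩ full with respect to J such that v ≤ w. -/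
open CoxeterSystem Polynomial

section CoxPre

variable {B : Type*} {W : Type*} [Group W] {M : CoxeterMatrix B}

/-- The alternating word of length `n` starting with the letter `i`
(and then alternating between `i` and `j`). -/
def altW (i j : B) : ℕ → List B
  | 0 => []
  | n + 1 => i :: altW j i n

variable (cs : CoxeterSystem M W)

/-- The Bruhat order on a Coxeter group: the reflexive-transitive closure of the
relation `u → u * t` (`t` a reflection) when the length goes up. -/
def bruhatLE : W → W → Prop :=
  Relation.ReflTransGen
    (fun u v => ∃ t, cs.IsReflection t ∧ v = u * t ∧ cs.length u < cs.length v)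

/-- The covering relation of the Bruhat order. -/
def bCov (u v : W) : Prop :=
  bruhatLE cs u v ∧ u ≠ v ∧ ∀ z, bruhatLE cs u z → bruhatLE cs z v → z = u ∨ z = v

/-- The set of coatoms of `v` in the Bruhat order. -/
def bCoat (v : W) : Set W := {x | bCov cs x v}

/-- A partial special matching of `W` equipped with the Bruhat order: a Bruhat order
ideal `dom` together with an involution of it such that `u ⋖ φ u` or `φ u ⋖ u` for all
`u ∈ dom`, satisfying the coatom condition. -/
structure BSM where
  dom : Set W
  toFun : W → W
  ideal : ∀ ⦃x y : W⦄, y ∈ dom → bruhatLE cs x y → x ∈ dom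
  maps : ∀ x ∈ dom, toFun x ∈ dom
  invol : ∀ x ∈ dom, toFun (toFun x) = x
  cov : ∀ x ∈ dom, bCov cs (toFun x) x ∨ bCov cs x (toFun x)
  coatom : ∀ u ∈ dom, bCov cs u (toFun u) →
    bCoat cs (toFun u) =
      {u} ∪ {w | ∃ v, bCov cs v u ∧ bCov cs v (toFun v) ∧ w = toFun v}

/-- The standard dihedral subgroup `⟨s,t⟩` of `W`, as a set. -/
def dihedral (s t : B) : Set W :=
  (Subgroup.closure {cs.simple s, cs.simple t} : Subgroup W)

/-- `w` is full with respect to `J ⊆ S`: for all distinct `i, j ∈ J`, `m i j < ∞` and the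
longest element of `⟨i,j⟩` is `≤ w` in Bruhat order. -/
def IsFullWrt (J : Set B) (w : W) : Prop :=
  ∀ i ∈ J, ∀ j ∈ J, i ≠ j →
    M i j ≠ 0 ∧ bruhatLE cs (cs.wordProd (altW i j (M i j))) w

/-- The standard axioms characterizing the `R`-polynomials of the Hecke algebra of `W`. -/
def RAxioms (R : W → W → Polynomial ℤ) : Prop :=
  (∀ u, R u u = 1) ∧
  (∀ u v, ¬ bruhatLE cs u v → R u v = 0) ∧
  (∀ (i : B) (x y : W),
      cs.length (cs.simple i * x) = cs.length x + 1 →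
      cs.length (cs.simple i * y) = cs.length y + 1 →
      R (cs.simple i * x) (cs.simple i * y) = R x y ∧
      R x (cs.simple i * y) = (X - 1) * R x y + X * R (cs.simple i * x) y) ∧
  (∀ (i : B) (x y : W),
      cs.length (x * cs.simple i) = cs.length x + 1 →
      cs.length (y * cs.simple i) = cs.length y + 1 →
      R (x * cs.simple i) (y * cs.simple i) = R x y ∧
      R x (y * cs.simple i) = (X - 1) * R x y + X * R (x * cs.simple i) y)

variable {cs}

/-- `ψ` extends the partial special matching `φ`. -/
def BExtends (ψ φ : BSM cs) : Prop :=
  φ.dom ⊆ ψ.dom ∧ ∀ x ∈ φ.dom, ψ.toFun x = φ.toFun x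

/-- `φ` is a maximal partial special matching. -/
def BMax (φ : BSM cs) : Prop := ∀ ψ : BSM cs, BExtends ψ φ → ψ.dom = φ.dom

/-- `φ` is `g`-regular on the left: its domain is stable under left multiplication by `g`
and `φ` commutes with left multiplication by `g`. -/
def LeftReg (φ : BSM cs) (g : W) : Prop :=
  (∀ x ∈ φ.dom, g * x ∈ φ.dom) ∧ ∀ x ∈ φ.dom, φ.toFun (g * x) = g * φ.toFun x

/-- `φ` is `g`-regular on the right. -/
def RightReg (φ : BSM cs) (g : W) : Prop :=
  (∀ x ∈ φ.dom, x * g ∈ φ.dom) ∧ ∀ x ∈ φ.dom, φ.toFun (x * g) = φ.toFun x * g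

end CoxPre

section Stmt8Proof

open CoxeterSystem List
open scoped Classical

variable {B : Type*} {W : Type*} [Group W] {M : CoxeterMatrix B}
variable (cs : CoxeterSystem M W)

local prefix:100 "ℓ" => cs.length
local prefix:100 "π" => cs.wordProd
local prefix:100 "σ" => cs.simple

namespace Stmt8

theorem simple_conj_cancel (i : B) (t : W) : σ i * (σ i * t * σ i) * σ i = t := by
  rw [← mul_assoc, ← mul_assoc, cs.simple_mul_simple_self, one_mul, mul_assoc,
    cs.simple_mul_simple_self, mul_one]

theorem simple_conj_eq_simple_iff (i : B) (t : W) :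
    (σ i * t * σ i = σ i) ↔ (t = σ i) := by
  constructor
  · intro h
    have := congrArg (fun x => σ i * x * σ i) h
    rw [simple_conj_cancel] at this
    rw [this, cs.simple_mul_simple_self, one_mul]
  · rintro rfl
    rw [cs.simple_mul_simple_self, one_mul]

/-- The permutation of `W × ZMod 2` associated to the simple reflection `i`. -/
noncomputable def refP (i : B) : Equiv.Perm (W × ZMod 2) :=
  Function.Involutive.toPerm
    (fun p => (σ i * p.1 * σ i, p.2 + if p.1 = σ i then 1 else 0)) (by
      rintro ⟨t, e⟩
      simp only [simple_conj_cancel, simple_conj_eq_simple_iff, Prod.mk.injEq]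
      refine ⟨trivial, ?_⟩
      rcases em (t = σ i) with h | h <;>
        simp only [h, if_true, if_false, add_zero, add_assoc]
      rw [(by decide : (1 : ZMod 2) + 1 = 0), add_zero])

theorem refP_apply (i : B) (t : W) (e : ZMod 2) :
    refP cs i (t, e) = (σ i * t * σ i, e + if t = σ i then 1 else 0) := rfl

end Stmt8

namespace Stmt8

theorem conj_eq_iff (g t y : W) : (g * t * g⁻¹ = y) ↔ (t = g⁻¹ * y * g) := by
  constructor
  · rintro rfl; group
  · rintro rfl; group

theorem simple_mul_base (i j : B) :
    σ j * (σ i * σ j) = (σ i * σ j)⁻¹ * σ j := by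
  rw [mul_inv_rev, cs.inv_simple, cs.inv_simple, mul_assoc]

theorem simple_mul_pow (i j : B) (n : ℕ) :
    σ j * (σ i * σ j) ^ n = ((σ i * σ j) ^ n)⁻¹ * σ j := by
  induction n with
  | zero => simp
  | succ n ih =>
    calc σ j * (σ i * σ j) ^ (n + 1)
        = (σ j * (σ i * σ j) ^ n) * (σ i * σ j) := by rw [pow_succ, mul_assoc]
      _ = ((σ i * σ j) ^ n)⁻¹ * (σ j * (σ i * σ j)) := by rw [ih, mul_assoc]
      _ = ((σ i * σ j) ^ n)⁻¹ * ((σ i * σ j)⁻¹ * σ j) := by rw [simple_mul_base]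
      _ = ((σ i * σ j) ^ (n + 1))⁻¹ * σ j := by
        rw [pow_succ']
        simp only [mul_inv_rev, cs.inv_simple, mul_assoc]

theorem pow_conj_simple_j (i j : B) (n : ℕ) :
    ((σ i * σ j) ^ n)⁻¹ * σ j * (σ i * σ j) ^ n = ((σ i * σ j) ^ (2 * n))⁻¹ * σ j := by
  calc ((σ i * σ j) ^ n)⁻¹ * σ j * (σ i * σ j) ^ n
      = ((σ i * σ j) ^ n)⁻¹ * (σ j * (σ i * σ j) ^ n) := by rw [mul_assoc]
    _ = ((σ i * σ j) ^ n)⁻¹ * (((σ i * σ j) ^ n)⁻¹ * σ j) := by rw [simple_mul_pow]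
    _ = ((σ i * σ j) ^ (2 * n))⁻¹ * σ j := by
        rw [two_mul, pow_add, mul_inv_rev, mul_assoc]

theorem pow_conj_simple_i (i j : B) (n : ℕ) :
    (σ j * (σ i * σ j) ^ n)⁻¹ * σ i * (σ j * (σ i * σ j) ^ n)
      = ((σ i * σ j) ^ (2 * n + 1))⁻¹ * σ j := by
  have hji : σ j * σ i = (σ i * σ j)⁻¹ := by
    rw [mul_inv_rev, cs.inv_simple, cs.inv_simple]
  calc (σ j * (σ i * σ j) ^ n)⁻¹ * σ i * (σ j * (σ i * σ j) ^ n)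
      = ((σ i * σ j) ^ n)⁻¹ * (σ j)⁻¹ * σ i * (σ j * (σ i * σ j) ^ n) := by rw [mul_inv_rev]
    _ = ((σ i * σ j) ^ n)⁻¹ * σ j * σ i * (σ j * (σ i * σ j) ^ n) := by rw [cs.inv_simple]
    _ = ((σ i * σ j) ^ n)⁻¹ * ((σ j * σ i) * σ j) * (σ i * σ j) ^ n := by
        simp only [mul_assoc]
    _ = ((σ i * σ j) ^ n)⁻¹ * ((σ i * σ j)⁻¹ * σ j) * (σ i * σ j) ^ n := by rw [hji]
    _ = ((σ i * σ j) ^ n)⁻¹ * (σ i * σ j)⁻¹ * (σ j * (σ i * σ j) ^ n) := by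
        simp only [mul_assoc]
    _ = ((σ i * σ j) ^ n)⁻¹ * (σ i * σ j)⁻¹ * (((σ i * σ j) ^ n)⁻¹ * σ j) := by
        rw [simple_mul_pow]
    _ = ((σ i * σ j) ^ (2 * n + 1))⁻¹ * σ j := by
        rw [show 2 * n + 1 = n + 1 + n by omega, pow_add, pow_succ]
        simp only [mul_inv_rev, cs.inv_simple, mul_assoc]

theorem refP_pow (i j : B) (n : ℕ) (t : W) (e : ZMod 2) :
    (((refP cs i * refP cs j) ^ n) (t, e)) =
      ((σ i * σ j) ^ n * t * ((σ i * σ j) ^ n)⁻¹,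
        e + ∑ a ∈ Finset.range (2 * n),
          (if t = (((σ i * σ j) ^ a)⁻¹ * σ j) then (1 : ZMod 2) else 0)) := by
  induction n with
  | zero => simp
  | succ n ih =>
    rw [pow_succ' (refP cs i * refP cs j), Equiv.Perm.mul_apply, ih, Equiv.Perm.mul_apply,
      refP_apply, refP_apply]
    have h2n : ((σ i * σ j) ^ n * t * ((σ i * σ j) ^ n)⁻¹ = σ j)
        ↔ (t = ((σ i * σ j) ^ (2 * n))⁻¹ * σ j) := by
      rw [conj_eq_iff, pow_conj_simple_j]
    have h2n1 : (σ j * ((σ i * σ j) ^ n * t * ((σ i * σ j) ^ n)⁻¹) * σ j = σ i)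
        ↔ (t = ((σ i * σ j) ^ (2 * n + 1))⁻¹ * σ j) := by
      have lhs_eq : σ j * ((σ i * σ j) ^ n * t * ((σ i * σ j) ^ n)⁻¹) * σ j
          = (σ j * (σ i * σ j) ^ n) * t * (σ j * (σ i * σ j) ^ n)⁻¹ := by
        rw [mul_inv_rev, cs.inv_simple]; group
      rw [lhs_eq, conj_eq_iff, pow_conj_simple_i]
    have hji : σ j * σ i = (σ i * σ j)⁻¹ := by
      rw [mul_inv_rev, cs.inv_simple, cs.inv_simple]
    ext
    · show σ i * (σ j * ((σ i * σ j) ^ n * t * ((σ i * σ j) ^ n)⁻¹) * σ j) * σ i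
        = (σ i * σ j) ^ (n + 1) * t * ((σ i * σ j) ^ (n + 1))⁻¹
      calc σ i * (σ j * ((σ i * σ j) ^ n * t * ((σ i * σ j) ^ n)⁻¹) * σ j) * σ i
          = (σ i * σ j) * ((σ i * σ j) ^ n * t * ((σ i * σ j) ^ n)⁻¹) * (σ j * σ i) := by
            simp only [mul_assoc]
        _ = (σ i * σ j) * ((σ i * σ j) ^ n * t * ((σ i * σ j) ^ n)⁻¹) * (σ i * σ j)⁻¹ := by
            rw [hji]
        _ = (σ i * σ j) ^ (n + 1) * t * ((σ i * σ j) ^ (n + 1))⁻¹ := by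
            rw [pow_succ']
            simp only [mul_inv_rev, cs.inv_simple, mul_assoc]
    · show _ + _ + _ + _ = _ + _
      rw [show 2 * (n + 1) = (2 * n) + 1 + 1 by omega, Finset.sum_range_succ,
        Finset.sum_range_succ]
      simp only [h2n, h2n1, add_assoc]

theorem refP_liftable : M.IsLiftable (fun i => refP cs i) := by
  intro i j
  ext ⟨t, e⟩
  · show (((refP cs i * refP cs j) ^ M i j) (t, e)).1 = t
    rw [refP_pow, cs.simple_mul_simple_pow]
    simp
  · show (((refP cs i * refP cs j) ^ M i j) (t, e)).2 = e
    rw [refP_pow]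
    have hz : ∑ a ∈ Finset.range (2 * M i j),
        (if t = (((σ i * σ j) ^ a)⁻¹ * σ j) then (1 : ZMod 2) else 0) = 0 := by
      rw [two_mul, Finset.sum_range_add]
      have heq : ∀ a : ℕ, ((σ i * σ j) ^ (M i j + a))⁻¹ = ((σ i * σ j) ^ a)⁻¹ := by
        intro a
        rw [pow_add, cs.simple_mul_simple_pow, one_mul]
      simp only [heq]
      exact CharTwo.add_self_eq_zero _
    show e + _ = e
    rw [hz, add_zero]

end Stmt8

namespace Stmt8

/-- The canonical homomorphism from `W` to the permutations of `W × ZMod 2`. -/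
noncomputable def brMu : W →* Equiv.Perm (W × ZMod 2) :=
  cs.lift ⟨fun i => refP cs i, refP_liftable cs⟩

theorem brMu_simple (i : B) : brMu cs (σ i) = refP cs i :=
  cs.lift_apply_simple (refP_liftable cs) i

/-- The mod-2 count of a reflection in the right inversion sequence of a word. -/
noncomputable def cnt (ω : List B) (t : W) : ZMod 2 :=
  ((cs.rightInvSeq ω).map (fun x => if t = x then (1 : ZMod 2) else 0)).sum

theorem brMu_wordProd (ω : List B) (t : W) (e : ZMod 2) :
    brMu cs (π ω) (t, e) = (π ω * t * (π ω)⁻¹, e + cnt cs ω t) := by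
  induction ω generalizing t e with
  | nil =>
    simp [cnt, cs.wordProd_nil]
  | cons i ω ih =>
    rw [cs.wordProd_cons, map_mul, Equiv.Perm.mul_apply, ih, brMu_simple, refP_apply]
    have hcnt : cnt cs (i :: ω) t
        = cnt cs ω t + (if t = (π ω)⁻¹ * σ i * π ω then (1 : ZMod 2) else 0) := by
      show (((π ω)⁻¹ * σ i * π ω :: cs.rightInvSeq ω).map
        (fun x => if t = x then (1 : ZMod 2) else 0)).sum = _
      rw [List.map_cons, List.sum_cons, add_comm]
      rfl
    have hiff : (π ω * t * (π ω)⁻¹ = σ i) ↔ (t = (π ω)⁻¹ * σ i * π ω) := by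
      rw [conj_eq_iff]
    ext
    · show σ i * (π ω * t * (π ω)⁻¹) * σ i = (σ i * π ω) * t * (σ i * π ω)⁻¹
      simp only [mul_inv_rev, cs.inv_simple, mul_assoc]
    · show e + cnt cs ω t + _ = e + cnt cs (i :: ω) t
      rw [hcnt, if_congr hiff rfl rfl, add_assoc]

/-- The parity cocycle. -/
noncomputable def NN (w t : W) : ZMod 2 := (brMu cs w (t, 0)).2

theorem cnt_eq_NN {ω : List B} {w : W} (hw : w = π ω) (t : W) :
    cnt cs ω t = NN cs w t := by
  rw [NN, hw, brMu_wordProd, zero_add]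

theorem brMu_apply (w t : W) (e : ZMod 2) :
    brMu cs w (t, e) = (w * t * w⁻¹, e + NN cs w t) := by
  obtain ⟨ω, rfl⟩ := cs.wordProd_surjective w
  rw [brMu_wordProd, cnt_eq_NN cs rfl]

theorem NN_mul (u v t : W) :
    NN cs (u * v) t = NN cs v t + NN cs u (v * t * v⁻¹) := by
  have h2 : brMu cs (u * v) (t, 0) = brMu cs u (brMu cs v (t, 0)) := by
    rw [map_mul, Equiv.Perm.mul_apply]
  rw [brMu_apply cs v, brMu_apply cs u, brMu_apply cs (u * v)] at h2
  have := congrArg Prod.snd h2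
  simpa using this

theorem NN_one (t : W) : NN cs 1 t = 0 := by
  rw [NN, map_one]
  rfl

theorem zmod2_add_eq_zero {x y : ZMod 2} (h : x + y = 0) : y = x := by
  revert h; revert x y; decide

theorem NN_inv_conj (u t : W) : NN cs u⁻¹ (u * t * u⁻¹) = NN cs u t := by
  have := NN_mul cs u⁻¹ u t
  rw [inv_mul_cancel, NN_one] at this
  exact zmod2_add_eq_zero (this.symm)

theorem NN_simple_self (i : B) : NN cs (σ i) (σ i) = 1 := by
  rw [← cnt_eq_NN cs (cs.wordProd_singleton i).symm]
  show ((cs.rightInvSeq [i]).map _).sum = 1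
  rw [cs.rightInvSeq_singleton]
  simp

theorem NN_refl_self {t : W} (ht : cs.IsReflection t) : NN cs t t = 1 := by
  obtain ⟨a, i, rfl⟩ := ht
  set t := a * σ i * a⁻¹ with hht
  have h1 : t = (a * σ i) * a⁻¹ := by rw [hht, mul_assoc]
  rw [h1, NN_mul]
  have h2 : a⁻¹ * t * a⁻¹⁻¹ = σ i := by rw [hht]; group
  rw [h2, NN_mul]
  have h3 : σ i * σ i * (σ i)⁻¹ = σ i := by group
  rw [h3, NN_simple_self]
  have h4 : NN cs a⁻¹ t = NN cs a (σ i) := by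
    rw [hht]; exact NN_inv_conj cs a (σ i)
  rw [h4]
  have : ∀ x : ZMod 2, x + (1 + x) = 1 := by decide
  exact this _

theorem cnt_ne_zero_mem {ω : List B} {t : W} (h : cnt cs ω t ≠ 0) :
    t ∈ cs.rightInvSeq ω := by
  by_contra hmem
  apply h
  apply List.sum_eq_zero
  intro x hx
  obtain ⟨y, hy, rfl⟩ := List.mem_map.mp hx
  rw [if_neg]
  rintro rfl
  exact hmem hy

theorem NN_eq_zero_of_ascent {w t : W} (ht : cs.IsReflection t)
    (hl : ℓ w < ℓ (w * t)) : NN cs w t = 0 := by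
  by_contra h
  obtain ⟨ω, hred, hw⟩ := cs.exists_reduced_word' w
  have hmem : t ∈ cs.rightInvSeq ω := by
    apply cnt_ne_zero_mem cs
    rw [cnt_eq_NN cs hw]
    exact h
  have := (cs.isRightInversion_of_mem_rightInvSeq hred hmem).2
  rw [← hw] at this
  omega

theorem NN_eq_one_of_descent {w t : W} (ht : cs.IsReflection t)
    (hl : ℓ (w * t) < ℓ w) : NN cs w t = 1 := by
  have hw : w = (w * t) * t := by rw [mul_assoc, ht.mul_self, mul_one]
  rw [hw, NN_mul]
  have h1 : t * t * t⁻¹ = t := by rw [ht.mul_self, one_mul, ht.inv]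
  rw [h1, NN_refl_self cs ht]
  have h2 : NN cs (w * t) t = 0 := by
    apply NN_eq_zero_of_ascent cs ht
    rw [mul_assoc, ht.mul_self, mul_one]
    omega
  rw [h2, add_zero]

/-- Strong exchange property. -/
theorem strongExchange (ω : List B) {t : W} (ht : cs.IsReflection t)
    (hl : ℓ (π ω * t) < ℓ (π ω)) :
    ∃ j < ω.length, π (ω.eraseIdx j) = π ω * t := by
  have h1 : NN cs (π ω) t = 1 := NN_eq_one_of_descent cs ht hl
  have h2 : t ∈ cs.rightInvSeq ω := by
    apply cnt_ne_zero_mem cs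
    rw [cnt_eq_NN cs rfl, h1]
    decide
  obtain ⟨j, hj, hget⟩ := List.mem_iff_getElem.mp h2
  have hj' : j < ω.length := by
    rwa [cs.length_rightInvSeq] at hj
  refine ⟨j, hj', ?_⟩
  rw [← cs.wordProd_mul_getD_rightInvSeq ω j]
  congr 1
  rw [List.getD_eq_getElem _ _ hj, hget]

end Stmt8


local infix:50 " ≼ " => bruhatLE cs

namespace Stmt8

theorem bLE.refl (w : W) : w ≼ w := Relation.ReflTransGen.refl

theorem bLE.trans {u v w : W} (h : u ≼ v) (h' : v ≼ w) : u ≼ w := h.trans h'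

theorem bLE.single {u : W} {t : W} (ht : cs.IsReflection t)
    (hl : ℓ u < ℓ (u * t)) : u ≼ u * t :=
  Relation.ReflTransGen.single ⟨t, ht, rfl, hl⟩

theorem bLE.single' {u w : W} {t : W} (ht : cs.IsReflection t) (hw : w = u * t)
    (hl : ℓ u < ℓ w) : u ≼ w := by subst hw; exact bLE.single cs ht hl

theorem bLE.length_le {u w : W} (h : u ≼ w) : ℓ u ≤ ℓ w := by
  induction h with
  | refl => exact le_refl _
  | tail _ h ih => obtain ⟨t, _, rfl, hl⟩ := h; omega

theorem bLE.inv {u w : W} (h : u ≼ w) : u⁻¹ ≼ w⁻¹ := by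
  induction h with
  | refl => exact bLE.refl cs _
  | @tail b c hub h ih =>
    obtain ⟨t, ht, rfl, hl⟩ := h
    refine ih.trans (bLE.single' cs (ht.conj b) ?_ ?_)
    · rw [mul_inv_rev, ht.inv]; group
    · rwa [cs.length_inv, cs.length_inv]

theorem bLE.leftSingle {u : W} {t : W} (ht : cs.IsReflection t)
    (hl : ℓ u < ℓ (t * u)) : u ≼ t * u := by
  refine bLE.single' cs (ht.conj u⁻¹) ?_ hl
  group

theorem bLE.leftDescent {w : W} {i : B} (hl : ℓ (σ i * w) < ℓ w) : σ i * w ≼ w := by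
  have := bLE.leftSingle cs (cs.isReflection_simple i) (u := σ i * w) (t := σ i) ?_
  · rwa [← mul_assoc, cs.simple_mul_simple_self, one_mul] at this
  · rwa [← mul_assoc, cs.simple_mul_simple_self, one_mul]

theorem bLE.rightDescent {w : W} {i : B} (hl : ℓ (w * σ i) < ℓ w) : w * σ i ≼ w := by
  have := bLE.single cs (cs.isReflection_simple i) (u := w * σ i) ?_
  · rwa [mul_assoc, cs.simple_mul_simple_self, mul_one] at this
  · rwa [mul_assoc, cs.simple_mul_simple_self, mul_one]

theorem bLE.one_le (w : W) : (1 : W) ≼ w := by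
  generalize h : ℓ w = n
  induction n using Nat.strong_induction_on generalizing w with
  | _ n ih =>
    rcases eq_or_ne w 1 with rfl | hw
    · exact bLE.refl cs 1
    · obtain ⟨i, hi⟩ := cs.exists_rightDescent_of_ne_one hw
      have hi' : ℓ (w * σ i) < ℓ w := hi
      exact (ih _ (h ▸ hi') _ rfl).trans (bLE.rightDescent cs hi')

end Stmt8

namespace Stmt8

theorem isReduced_nil : cs.IsReduced ([] : List B) := by
  simp [CoxeterSystem.IsReduced]

/-- Deletion property: every word has a reduced sublist with the same product. -/
theorem deletion (ω : List B) :
    ∃ κ : List B, κ.Sublist ω ∧ cs.IsReduced κ ∧ π κ = π ω := by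
  generalize hn : ω.length = n
  induction n using Nat.strong_induction_on generalizing ω with
  | _ n ihn =>
  by_cases hred : cs.IsReduced ω
  · exact ⟨ω, List.Sublist.refl ω, hred, rfl⟩
  · have hex : ∃ k, ¬ cs.IsReduced (ω.take (k + 1)) := by
      refine ⟨ω.length - 1, ?_⟩
      have hne : ω ≠ [] := by
        rintro rfl
        exact hred (isReduced_nil cs)
      have : ω.length - 1 + 1 = ω.length := by
        have := List.length_pos_iff.mpr hne
        omega
      rwa [this, List.take_length]
    classical
    set k := Nat.find hex with hkdef
    have hk : ¬ cs.IsReduced (ω.take (k + 1)) := Nat.find_spec hex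
    have hkred : cs.IsReduced (ω.take k) := by
      rcases Nat.eq_zero_or_pos k with hk0 | hk0
      · rw [hk0]
        simpa using isReduced_nil cs
      · have := Nat.find_min hex (show k - 1 < k by omega)
        rw [not_not] at this
        have hkk : k - 1 + 1 = k := by omega
        rwa [hkk] at this
    have hklen : k < ω.length := by
      by_contra hcon
      push_neg at hcon
      have h1 : ω.take (k + 1) = ω := List.take_of_length_le (by omega)
      have h2 : ω.take k = ω := List.take_of_length_le hcon
      rw [h1] at hk
      rw [h2] at hkred
      exact hk hkred
    have htake : (ω.take k).concat (ω.get ⟨k, hklen⟩) = ω.take (k + 1) :=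
      List.take_concat_get hklen
    have hlentk : (ω.take k).length = k := by
      rw [List.length_take]
      omega
    have hlk : ℓ (π (ω.take k)) = k := by
      rw [hkred, hlentk]
    have hdesc : ℓ (π (ω.take k) * σ (ω.get ⟨k, hklen⟩)) < ℓ (π (ω.take k)) := by
      have hprod : π (ω.take (k + 1)) = π (ω.take k) * σ (ω.get ⟨k, hklen⟩) := by
        rw [← htake, cs.wordProd_concat]
      have hlen1 : (ω.take (k + 1)).length = k + 1 := by
        rw [List.length_take]
        omega
      have hne : ℓ (π (ω.take (k + 1))) ≠ k + 1 := by
        intro hcon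
        exact hk (by rw [CoxeterSystem.IsReduced, hlen1, hcon])
      rcases cs.length_mul_simple (π (ω.take k)) (ω.get ⟨k, hklen⟩) with hup | hdn
      · rw [hlk] at hup
        rw [hprod, hup] at hne
        exact absurd rfl hne
      · omega
    obtain ⟨j, hjlt, hj⟩ := strongExchange cs (ω.take k) (cs.isReflection_simple _) hdesc
    set ω' := (ω.take k).eraseIdx j ++ ω.drop (k + 1) with hω'
    have hπω' : π ω' = π ω := by
      rw [hω', cs.wordProd_append, hj]
      have : π (ω.take k) * σ (ω.get ⟨k, hklen⟩) = π (ω.take (k + 1)) := by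
        rw [← htake, cs.wordProd_concat]
      rw [this, ← cs.wordProd_append, List.take_append_drop]
    have hsub : ω'.Sublist ω := by
      have h1 : ω'.Sublist ((ω.take k) ++ ω.drop (k + 1)) :=
        List.Sublist.append (List.eraseIdx_sublist _ j) (List.Sublist.refl _)
      have h2 : ((ω.take k) ++ ω.drop (k + 1)) = ω.eraseIdx k :=
        (List.eraseIdx_eq_take_drop_succ ω k).symm
      rw [h2] at h1
      exact h1.trans (List.eraseIdx_sublist ω k)
    have hlen' : ω'.length < n := by
      rw [hω', List.length_append, List.length_eraseIdx, List.length_drop]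
      rw [hlentk, if_pos (by rwa [hlentk] at hjlt)]
      omega
    obtain ⟨κ, hκ1, hκ2, hκ3⟩ := ihn ω'.length hlen' ω' rfl
    exact ⟨κ, hκ1.trans hsub, hκ2, by rw [hκ3, hπω']⟩

/-- Any element below `w` in Bruhat order is the product of a reduced sublist of
any word for `w`. -/
theorem exists_reduced_sublist {u w : W} (h : u ≼ w) (ω : List B) (hw : π ω = w) :
    ∃ κ : List B, κ.Sublist ω ∧ cs.IsReduced κ ∧ π κ = u := by
  induction h using Relation.ReflTransGen.head_induction_on with
  | refl =>
    obtain ⟨κ, h1, h2, h3⟩ := deletion cs ω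
    exact ⟨κ, h1, h2, by rw [h3, hw]⟩
  | @head u' x hstep hchain ih =>
    obtain ⟨t, ht, hx, hl⟩ := hstep
    obtain ⟨κ, hκ1, hκ2, hκ3⟩ := ih
    have hxt : x * t = u' := by rw [hx, mul_assoc, ht.mul_self, mul_one]
    have hdesc : ℓ (π κ * t) < ℓ (π κ) := by
      rw [hκ3, hxt]
      exact hl
    obtain ⟨j, hjlt, hj⟩ := strongExchange cs κ ht hdesc
    obtain ⟨κ', h1, h2, h3⟩ := deletion cs (κ.eraseIdx j)
    refine ⟨κ', (h1.trans (List.eraseIdx_sublist κ j)).trans hκ1, h2, ?_⟩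
    rw [h3, hj, hκ3, hxt]

end Stmt8

namespace Stmt8

theorem liftC {u w : W} {i : B} (h : u ≼ w) (hw : ℓ w < ℓ (w * σ i))
    (hB : ∀ x, ℓ x ≤ ℓ w → ∀ u', u' ≼ x → ℓ (x * σ i) < ℓ x → u' * σ i ≼ x) :
    u * σ i ≼ w * σ i := by
  induction h using Relation.ReflTransGen.head_induction_on with
  | refl => exact bLE.refl cs _
  | @head u' x hstep hchain ih =>
    obtain ⟨t, ht, hx, hl⟩ := hstep
    rcases cs.length_mul_simple x i with hup | hdn
    · have h1 : u' * σ i ≼ x * σ i := by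
        have hrefl : cs.IsReflection (σ i * t * σ i) := by
          have := ht.conj (σ i)
          rwa [cs.inv_simple] at this
        refine bLE.single' cs hrefl ?_ ?_
        · rw [hx]
          simp only [mul_assoc, cs.simple_mul_simple_cancel_left]
        · have h2 : ℓ (u' * σ i) ≤ ℓ u' + 1 := by
            rcases cs.length_mul_simple u' i with h' | h' <;> omega
          omega
      exact h1.trans ih
    · have hxw : ℓ x ≤ ℓ w := bLE.length_le cs hchain
      have h1 : u' ≼ x := bLE.single' cs ht hx hl
      have h2 : u' * σ i ≼ x := hB x hxw u' h1 (by omega)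
      exact (h2.trans hchain).trans (bLE.single cs (cs.isReflection_simple i) hw)

theorem liftCleft {u w : W} {i : B} (h : u ≼ w) (hw : ℓ w < ℓ (σ i * w))
    (hB : ∀ x, ℓ x ≤ ℓ w → ∀ u', u' ≼ x → ℓ (x * σ i) < ℓ x → u' * σ i ≼ x) :
    σ i * u ≼ σ i * w := by
  have hwinv : w⁻¹ * σ i = (σ i * w)⁻¹ := by rw [mul_inv_rev, cs.inv_simple]
  have huinv : u⁻¹ * σ i = (σ i * u)⁻¹ := by rw [mul_inv_rev, cs.inv_simple]
  have h1 : u⁻¹ * σ i ≼ w⁻¹ * σ i := by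
    apply liftC cs (bLE.inv cs h)
    · rw [hwinv, cs.length_inv, cs.length_inv]
      exact hw
    · intro x hx
      exact hB x (by rwa [cs.length_inv] at hx)
  rw [huinv, hwinv] at h1
  have h2 := bLE.inv cs h1
  rwa [inv_inv, inv_inv] at h2

theorem master (n : ℕ) :
    (∀ ω : List B, cs.IsReduced ω → ω.length ≤ n → ∀ κ : List B, κ.Sublist ω → π κ ≼ π ω)
    ∧ (∀ w : W, ℓ w ≤ n → ∀ i : B, ℓ (w * σ i) < ℓ w → ∀ u, u ≼ w → u * σ i ≼ w) := by
  induction n using Nat.strong_induction_on with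
  | _ n ihn =>
  have hA : ∀ ω : List B, cs.IsReduced ω → ω.length ≤ n →
      ∀ κ : List B, κ.Sublist ω → π κ ≼ π ω := by
    intro ω hred hlen κ hκ
    cases ω with
    | nil =>
      rw [List.sublist_nil.mp hκ]
      exact bLE.refl cs _
    | cons i ω' =>
      have hn1 : 1 ≤ n := le_trans (by simp) hlen
      have hA' := (ihn (n - 1) (by omega)).1
      have hred' : cs.IsReduced ω' := by
        have := CoxeterSystem.IsReduced.drop hred (j := 1)
        simpa using this
      have hlen' : ω'.length ≤ n - 1 := by
        simp only [List.length_cons] at hlen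
        omega
      have hstep : ℓ (π (i :: ω')) = ℓ (π ω') + 1 := by
        have h1 : ℓ (π (i :: ω')) = ω'.length + 1 := by rw [hred]; simp
        rw [h1, hred']
      have hlift : π ω' ≼ π (i :: ω') := by
        rw [cs.wordProd_cons] at hstep ⊢
        exact bLE.leftSingle cs (cs.isReflection_simple i) (by omega)
      rcases List.sublist_cons_iff.mp hκ with hsub | ⟨κ₂, rfl, hsub⟩
      · exact (hA' ω' hred' hlen' κ hsub).trans hlift
      · have h2 : π κ₂ ≼ π ω' := hA' ω' hred' hlen' κ₂ hsub
        have hcons : π (i :: κ₂) = σ i * π κ₂ := cs.wordProd_cons i κ₂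
        rcases cs.length_simple_mul (π κ₂) i with hup | hdn
        · rw [hcons, cs.wordProd_cons]
          apply liftCleft cs h2
          · rw [cs.wordProd_cons] at hstep
            omega
          · intro x hx u' hu' hdescx
            refine (ihn (n - 1) (by omega)).2 x ?_ i hdescx u' hu'
            rw [hred'] at hx
            omega
        · rw [hcons]
          have h3 : σ i * π κ₂ ≼ π κ₂ := bLE.leftDescent cs (by omega)
          exact (h3.trans h2).trans hlift
  refine ⟨hA, ?_⟩
  intro w hw i hdesc u hu
  obtain ⟨ω', hred', hprod'⟩ := cs.exists_reduced_word' (w * σ i)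
  have hωlen : ω'.length = ℓ (w * σ i) := by rw [← hred', ← hprod']
  have hπω : π (ω' ++ [i]) = w := by
    rw [cs.wordProd_append, cs.wordProd_singleton, ← hprod', mul_assoc,
      cs.simple_mul_simple_self, mul_one]
  have hlup : ℓ (w * σ i) + 1 = ℓ w := by
    rcases cs.length_mul_simple w i with h | h <;> omega
  have hredω : cs.IsReduced (ω' ++ [i]) := by
    show ℓ (π _) = _
    rw [hπω, List.length_append, List.length_singleton, hωlen]
    omega
  obtain ⟨κ, hκsub, hκred, hκprod⟩ := exists_reduced_sublist cs hu (ω' ++ [i]) hπω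
  rcases List.sublist_append_iff.mp hκsub with ⟨l₁, l₂, rfl, hl₁, hl₂⟩
  rcases List.sublist_singleton.mp hl₂ with rfl | rfl
  · rw [List.append_nil] at hκprod hκred
    have hul : π l₁ = u := hκprod
    have hules : u ≼ w * σ i := by
      rw [hprod', ← hul]
      exact hA ω' hred' (by omega) l₁ hl₁
    rcases cs.length_mul_simple u i with hup | hdn
    · have hsub2 : (l₁ ++ [i]).Sublist (ω' ++ [i]) :=
        List.Sublist.append hl₁ (List.Sublist.refl _)
      have h4 := hA (ω' ++ [i]) hredω
        (by rw [List.length_append, List.length_singleton, hωlen]; omega) (l₁ ++ [i]) hsub2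
      rwa [hπω, cs.wordProd_append, cs.wordProd_singleton, hul] at h4
    · have h1 : u * σ i ≼ u := bLE.rightDescent cs (by omega)
      exact (h1.trans hules).trans (bLE.rightDescent cs hdesc)
  · rw [cs.wordProd_append, cs.wordProd_singleton] at hκprod
    have husi : u * σ i = π l₁ := by
      rw [← hκprod, mul_assoc, cs.simple_mul_simple_self, mul_one]
    rw [husi]
    have h1 : π l₁ ≼ π ω' := hA ω' hred' (by omega) l₁ hl₁
    rw [← hprod'] at h1
    exact h1.trans (bLE.rightDescent cs hdesc)

end Stmt8

namespace Stmt8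

theorem subwordLE {ω κ : List B} (hred : cs.IsReduced ω) (hκ : κ.Sublist ω) : π κ ≼ π ω :=
  (master cs ω.length).1 ω hred (le_refl _) κ hκ

theorem propB {w u : W} {i : B} (hdesc : ℓ (w * σ i) < ℓ w) (hu : u ≼ w) : u * σ i ≼ w :=
  (master cs (ℓ w)).2 w (le_refl _) i hdesc u hu

theorem liftMono {u w : W} {i : B} (h : u ≼ w) (hw : ℓ w < ℓ (w * σ i)) :
    u * σ i ≼ w * σ i :=
  liftC cs h hw (fun _ _ _ hu' hdx => propB cs hdx hu')

theorem liftMonoLeft {u w : W} {i : B} (h : u ≼ w) (hw : ℓ w < ℓ (σ i * w)) :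
    σ i * u ≼ σ i * w :=
  liftCleft cs h hw (fun _ _ _ hu' hdx => propB cs hdx hu')

theorem liftL2 {u w : W} {i : B} (hdesc : ℓ (w * σ i) < ℓ w) (hu : u ≼ w)
    (hasc : ℓ u < ℓ (u * σ i)) : u ≼ w * σ i := by
  obtain ⟨ω', hred', hprod'⟩ := cs.exists_reduced_word' (w * σ i)
  have hπω : π (ω' ++ [i]) = w := by
    rw [cs.wordProd_append, cs.wordProd_singleton, ← hprod', mul_assoc,
      cs.simple_mul_simple_self, mul_one]
  obtain ⟨κ, hκsub, hκred, hκprod⟩ := exists_reduced_sublist cs hu (ω' ++ [i]) hπω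
  rcases List.sublist_append_iff.mp hκsub with ⟨l₁, l₂, rfl, hl₁, hl₂⟩
  rcases List.sublist_singleton.mp hl₂ with rfl | rfl
  · rw [List.append_nil] at hκprod
    rw [hprod', ← hκprod]
    exact subwordLE cs hred' hl₁
  · exfalso
    rw [cs.wordProd_append, cs.wordProd_singleton] at hκprod
    have husi : u * σ i = π l₁ := by
      rw [← hκprod, mul_assoc, cs.simple_mul_simple_self, mul_one]
    have h1 : ℓ (u * σ i) ≤ l₁.length := husi ▸ cs.length_wordProd_le l₁
    have h2 : ℓ u = l₁.length + 1 := by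
      have h3 := hκred
      rw [CoxeterSystem.IsReduced, cs.wordProd_append, cs.wordProd_singleton, hκprod,
        List.length_append, List.length_singleton] at h3
      omega
    omega

theorem liftL1 {u w : W} {i : B} (hdesc : ℓ (w * σ i) < ℓ w) (hu : u ≼ w)
    (hd2 : ℓ (u * σ i) < ℓ u) : u * σ i ≼ w * σ i := by
  obtain ⟨ω', hred', hprod'⟩ := cs.exists_reduced_word' (w * σ i)
  have hπω : π (ω' ++ [i]) = w := by
    rw [cs.wordProd_append, cs.wordProd_singleton, ← hprod', mul_assoc,
      cs.simple_mul_simple_self, mul_one]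
  obtain ⟨κ, hκsub, hκred, hκprod⟩ := exists_reduced_sublist cs hu (ω' ++ [i]) hπω
  rcases List.sublist_append_iff.mp hκsub with ⟨l₁, l₂, rfl, hl₁, hl₂⟩
  rcases List.sublist_singleton.mp hl₂ with rfl | rfl
  · rw [List.append_nil] at hκprod
    have h1 : u ≼ w * σ i := by
      rw [hprod', ← hκprod]
      exact subwordLE cs hred' hl₁
    exact (bLE.rightDescent cs hd2).trans h1
  · rw [cs.wordProd_append, cs.wordProd_singleton] at hκprod
    have husi : u * σ i = π l₁ := by
      rw [← hκprod, mul_assoc, cs.simple_mul_simple_self, mul_one]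
    rw [husi, hprod']
    exact subwordLE cs hred' hl₁

theorem liftL5 {u w : W} {i : B} (hdesc : ℓ (w * σ i) < ℓ w) (hu : u ≼ w * σ i)
    (hasc : ℓ u < ℓ (u * σ i)) : u * σ i ≼ w := by
  have hcan : w * σ i * σ i = w := by
    rw [mul_assoc, cs.simple_mul_simple_self, mul_one]
  have := liftMono cs hu (i := i) (by rw [hcan]; omega)
  rwa [hcan] at this

theorem leftL1 {u w : W} {i : B} (hdesc : ℓ (σ i * w) < ℓ w) (hu : u ≼ w)
    (hd2 : ℓ (σ i * u) < ℓ u) : σ i * u ≼ σ i * w := by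
  have hwinv : w⁻¹ * σ i = (σ i * w)⁻¹ := by rw [mul_inv_rev, cs.inv_simple]
  have huinv : u⁻¹ * σ i = (σ i * u)⁻¹ := by rw [mul_inv_rev, cs.inv_simple]
  have h1 : u⁻¹ * σ i ≼ w⁻¹ * σ i := by
    apply liftL1 cs ?_ (bLE.inv cs hu) ?_
    · rw [hwinv, cs.length_inv, cs.length_inv]; exact hdesc
    · rw [huinv, cs.length_inv, cs.length_inv]; exact hd2
  rw [huinv, hwinv] at h1
  have h2 := bLE.inv cs h1
  rwa [inv_inv, inv_inv] at h2

theorem leftL2 {u w : W} {i : B} (hdesc : ℓ (σ i * w) < ℓ w) (hu : u ≼ w)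
    (hasc : ℓ u < ℓ (σ i * u)) : u ≼ σ i * w := by
  have hwinv : w⁻¹ * σ i = (σ i * w)⁻¹ := by rw [mul_inv_rev, cs.inv_simple]
  have huinv : u⁻¹ * σ i = (σ i * u)⁻¹ := by rw [mul_inv_rev, cs.inv_simple]
  have h1 : u⁻¹ ≼ w⁻¹ * σ i := by
    apply liftL2 cs ?_ (bLE.inv cs hu) ?_
    · rw [hwinv, cs.length_inv, cs.length_inv]; exact hdesc
    · rw [huinv, cs.length_inv, cs.length_inv]; exact hasc
  rw [hwinv] at h1
  have h2 := bLE.inv cs h1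
  rwa [inv_inv, inv_inv] at h2

theorem leftL5 {u w : W} {i : B} (hdesc : ℓ (σ i * w) < ℓ w) (hu : u ≼ σ i * w)
    (hasc : ℓ u < ℓ (σ i * u)) : σ i * u ≼ w := by
  have hwinv : w⁻¹ * σ i = (σ i * w)⁻¹ := by rw [mul_inv_rev, cs.inv_simple]
  have huinv : u⁻¹ * σ i = (σ i * u)⁻¹ := by rw [mul_inv_rev, cs.inv_simple]
  have h1 : u⁻¹ * σ i ≼ w⁻¹ := by
    apply liftL5 cs ?_ ?_ ?_
    · rw [hwinv, cs.length_inv, cs.length_inv]; exact hdesc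
    · rw [hwinv]; exact bLE.inv cs hu
    · rw [huinv, cs.length_inv, cs.length_inv]; exact hasc
  rw [huinv] at h1
  have h2 := bLE.inv cs h1
  rwa [inv_inv, inv_inv] at h2

theorem wordProd_mem_WJ {J : Set B} {ω : List B} (h : ∀ b ∈ ω, b ∈ J) :
    π ω ∈ Subgroup.closure (cs.simple '' J) := by
  induction ω with
  | nil => rw [cs.wordProd_nil]; exact one_mem _
  | cons i ω ih =>
    rw [cs.wordProd_cons]
    refine mul_mem (Subgroup.subset_closure ⟨i, h i (by simp), rfl⟩) (ih ?_)
    intro b hb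
    exact h b (by simp [hb])

theorem exists_word_of_mem_WJ {J : Set B} {u : W}
    (hu : u ∈ Subgroup.closure (cs.simple '' J)) :
    ∃ ω : List B, (∀ b ∈ ω, b ∈ J) ∧ π ω = u := by
  induction hu using Subgroup.closure_induction with
  | mem x hx =>
    obtain ⟨j, hj, rfl⟩ := hx
    exact ⟨[j], by simpa using hj, cs.wordProd_singleton j⟩
  | one => exact ⟨[], by simp, cs.wordProd_nil⟩
  | mul x y hx hy ihx ihy =>
    obtain ⟨ω₁, h1, h2⟩ := ihx
    obtain ⟨ω₂, h3, h4⟩ := ihy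
    refine ⟨ω₁ ++ ω₂, ?_, by rw [cs.wordProd_append, h2, h4]⟩
    intro b hb
    rcases List.mem_append.mp hb with h | h
    · exact h1 b h
    · exact h3 b h
  | inv x hx ihx =>
    obtain ⟨ω, h1, h2⟩ := ihx
    refine ⟨ω.reverse, ?_, by rw [cs.wordProd_reverse, h2]⟩
    intro b hb
    exact h1 b (List.mem_reverse.mp hb)

theorem length_lt_of_not_mem {J : Set B} {u : W}
    (hu : u ∈ Subgroup.closure (cs.simple '' J)) {i : B}
    (hi : σ i ∉ Subgroup.closure (cs.simple '' J)) : ℓ u < ℓ (σ i * u) := by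
  rcases cs.length_simple_mul u i with hup | hdn
  · omega
  · exfalso
    obtain ⟨ω, hωJ, hωu⟩ := exists_word_of_mem_WJ cs (inv_mem hu)
    have hdesc : ℓ (π ω * σ i) < ℓ (π ω) := by
      rw [hωu]
      have h1 : u⁻¹ * σ i = (σ i * u)⁻¹ := by rw [mul_inv_rev, cs.inv_simple]
      rw [h1, cs.length_inv, cs.length_inv]
      omega
    obtain ⟨j, hjlt, hj⟩ := strongExchange cs ω (cs.isReflection_simple i) hdesc
    apply hi
    have hsi : σ i = u * π (ω.eraseIdx j) := by
      rw [hj, hωu, ← mul_assoc, mul_inv_cancel, one_mul]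
    rw [hsi]
    refine mul_mem hu (wordProd_mem_WJ cs ?_)
    intro b hb
    exact hωJ b ((List.eraseIdx_sublist ω j).subset hb)

theorem exists_greatest (J : Set B) (w : W) :
    ∃ v, v ∈ Subgroup.closure (cs.simple '' J) ∧ v ≼ w ∧
      ∀ u, u ∈ Subgroup.closure (cs.simple '' J) → u ≼ w → u ≼ v := by
  generalize hn : ℓ w = n
  induction n using Nat.strong_induction_on generalizing w with
  | _ n ihn =>
  rcases eq_or_ne w 1 with rfl | hne
  · refine ⟨1, one_mem _, bLE.refl cs 1, ?_⟩
    intro u _ hul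
    have h0 : ℓ u ≤ ℓ (1 : W) := bLE.length_le cs hul
    rw [cs.length_one] at h0
    have hu1 : u = 1 := cs.length_eq_zero_iff.mp (by omega)
    rw [hu1]
    exact bLE.refl cs 1
  · obtain ⟨i, hi⟩ := cs.exists_leftDescent_of_ne_one hne
    have hdesc : ℓ (σ i * w) < ℓ w := hi
    have hlup : ℓ (σ i * w) + 1 = ℓ w := by
      rcases cs.length_simple_mul w i with h | h <;> omega
    obtain ⟨v', hv'mem, hv'le, hv'max⟩ := ihn (ℓ (σ i * w)) (by omega) (σ i * w) rfl
    have hwle : σ i * w ≼ w := bLE.leftDescent cs hdesc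
    have hv'len : ℓ v' ≤ ℓ (σ i * w) := bLE.length_le cs hv'le
    by_cases hsi : σ i ∈ Subgroup.closure (cs.simple '' J)
    · rcases cs.length_simple_mul v' i with hup | hdn
      · -- Case A : v = σ i * v'
        refine ⟨σ i * v', mul_mem hsi hv'mem, leftL5 cs hdesc hv'le (by omega), ?_⟩
        intro u hu hul
        rcases cs.length_simple_mul u i with huup | hudn
        · have h1 : u ≼ σ i * w := leftL2 cs hdesc hul (by omega)
          have h2 : u ≼ v' := hv'max u hu h1
          exact h2.trans (bLE.leftSingle cs (cs.isReflection_simple i) (by omega))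
        · have h1 : σ i * u ≼ σ i * w := leftL1 cs hdesc hul (by omega)
          have h2 : σ i * u ≼ v' := hv'max (σ i * u) (mul_mem hsi hu) h1
          have h3 : σ i * (σ i * u) ≼ σ i * v' := by
            apply liftMonoLeft cs h2
            omega
          rwa [cs.simple_mul_simple_cancel_left] at h3
      · -- Case B : v = v'
        refine ⟨v', hv'mem, hv'le.trans hwle, ?_⟩
        intro u hu hul
        rcases cs.length_simple_mul u i with huup | hudn
        · exact hv'max u hu (leftL2 cs hdesc hul (by omega))
        · have h1 : σ i * u ≼ σ i * w := leftL1 cs hdesc hul (by omega)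
          have h2 : σ i * u ≼ v' := hv'max (σ i * u) (mul_mem hsi hu) h1
          have h3 : σ i * u ≼ σ i * v' := by
            apply leftL2 cs (by omega) h2
            rw [cs.simple_mul_simple_cancel_left]
            omega
          have h4 : σ i * (σ i * u) ≼ σ i * (σ i * v') := by
            apply liftMonoLeft cs h3
            rw [cs.simple_mul_simple_cancel_left]
            omega
          rwa [cs.simple_mul_simple_cancel_left, cs.simple_mul_simple_cancel_left] at h4
    · -- Case C
      refine ⟨v', hv'mem, hv'le.trans hwle, ?_⟩
      intro u hu hul
      exact hv'max u hu (leftL2 cs hdesc hul (length_lt_of_not_mem cs hu hsi))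

end Stmt8


namespace Stmt8

theorem altW_mem : ∀ (n : ℕ) (a b : B), ∀ x ∈ altW a b n, x = a ∨ x = b := by
  intro n
  induction n with
  | zero => intro a b x hx; simp [altW] at hx
  | succ n ih =>
    intro a b x hx
    rw [show altW a b (n + 1) = a :: altW b a n from rfl] at hx
    rcases List.mem_cons.mp hx with rfl | hx
    · exact Or.inl rfl
    · rcases ih b a x hx with h | h
      · exact Or.inr h
      · exact Or.inl h

end Stmt8

end Stmt8Proof


/-- if `w` is full with respect to `J ⊆ S`, then there is a `v` in the
standard parabolic subgroup `⟨J⟩`, full with respect to `J`, with `v ≤ w`. -/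
theorem stmt8 {B : Type*} {W : Type*} [Group W] {M : CoxeterMatrix B}
    (cs : CoxeterSystem M W) (J : Set B) (w : W) (hw : IsFullWrt cs J w) :
    ∃ v ∈ (Subgroup.closure (cs.simple '' J) : Subgroup W),
      IsFullWrt cs J v ∧ bruhatLE cs v w := by
  obtain ⟨v, hvmem, hvle, hvmax⟩ := Stmt8.exists_greatest cs J w
  refine ⟨v, hvmem, ?_, hvle⟩
  intro i hi j hj hij
  obtain ⟨hM, hle⟩ := hw i hi j hj hij
  refine ⟨hM, ?_⟩
  refine hvmax _ ?_ hle
  apply Stmt8.wordProd_mem_WJ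
  intro b hb
  rcases Stmt8.altW_mem (M i j) i j b hb with rfl | rfl
  · exact hi
  · exact hj
end

section
/- Let φ be a special matching of a dihedral Coxeter group ⟨x, y⟩ with φ(e) one of the generators, and for j ≤ m_{xy} let Y_j = yxyx··· (j letters, starting with y). Then φ fails to be x-regular on the left if and only if there exists j ≤ m_{xy} − 3 with φ(Y_j) = Y_{j+1} and φ(xY_j) ≠ xY_{j+1} (in which case necessarily φ(xY_j) = Y_{j+2}). -/
open CoxeterSystem Polynomial

namespace S13

open CoxeterSystem DihedralGroup

variable {B : Type*} {W : Type*} [Group W] {M : CoxeterMatrix B}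

theorem altW_concat (i j : B) (n : ℕ) :
    altW i j (n + 1) = altW i j n ++ [if Even n then i else j] := by
  induction n generalizing i j with
  | zero => simp [altW]
  | succ n ih =>
    show i :: altW j i (n + 1) = (i :: altW j i n) ++ _
    rw [ih j i]
    rcases Nat.even_or_odd n with h | h
    · simp [h, Nat.even_add_one]
    · simp [Nat.not_even_iff_odd.mpr h, Nat.even_add_one]

theorem altW_eq_alternatingWord (i j : B) (n : ℕ) :
    altW i j n = if Even n then CoxeterSystem.alternatingWord i j n
      else CoxeterSystem.alternatingWord j i n := by
  induction n generalizing i j with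
  | zero => simp [altW, CoxeterSystem.alternatingWord]
  | succ n ih =>
    show i :: altW j i n = _
    rw [ih j i]
    rcases Nat.even_or_odd n with h | h
    · rw [if_pos h, if_neg (by simp [Nat.even_add_one, h]),
        CoxeterSystem.alternatingWord_succ', if_pos h]
    · rw [if_neg (Nat.not_even_iff_odd.mpr h),
        if_pos (Nat.even_add_one.mpr (Nat.not_even_iff_odd.mpr h)),
        CoxeterSystem.alternatingWord_succ', if_neg (Nat.not_even_iff_odd.mpr h)]

variable (cs : CoxeterSystem M W)

theorem XA_succ (x y : B) (k : ℕ) :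
    cs.wordProd (altW x y (k + 1)) = cs.simple x * cs.wordProd (altW y x k) :=
  cs.wordProd_cons x (altW y x k)

theorem XA_concat (x y : B) (k : ℕ) :
    cs.wordProd (altW x y (k + 1)) =
      cs.wordProd (altW x y k) * cs.simple (if Even k then x else y) := by
  rw [altW_concat, cs.wordProd_append]
  rcases Nat.even_or_odd k with h | h
  · simp [h]
  · simp [Nat.not_even_iff_odd.mpr h]

theorem X_eq_Y_top (x y : B) :
    cs.wordProd (altW x y (M x y)) = cs.wordProd (altW y x (M x y)) := by
  have hb := cs.wordProd_braidWord_eq x y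
  unfold CoxeterSystem.braidWord at hb
  rw [M.symmetric y x] at hb
  rcases Nat.even_or_odd (M x y) with h | h
  · rw [altW_eq_alternatingWord, if_pos h, altW_eq_alternatingWord, if_pos h]
    exact hb
  · rw [altW_eq_alternatingWord, if_neg (Nat.not_even_iff_odd.mpr h),
      altW_eq_alternatingWord, if_neg (Nat.not_even_iff_odd.mpr h)]
    exact hb.symm

theorem zmodCast_ne (m k : ℕ) (hk : 0 < k) (h : m = 0 ∨ k < m) :
    ((k : ZMod m)) ≠ 0 := by
  intro hc
  rcases h with h | h
  · subst h
    exact hk.ne' (Nat.cast_eq_zero.mp hc)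
  · haveI : NeZero m := ⟨by omega⟩
    have hd := (ZMod.natCast_eq_zero_iff k m).mp hc
    have := Nat.le_of_dvd hk hd
    omega

section Rep

open Classical in
/-- The map sending the two generators to two reflections of the dihedral group. -/
noncomputable def drep (M : CoxeterMatrix B) (x y : B) : B → DihedralGroup (M x y) :=
  fun b => if b = x then sr 0 else sr 1

theorem r_neg_one_pow_eq_one {n : ℕ} (h : (r 1 : DihedralGroup n) ^ n = 1) :
    (r (-1) : DihedralGroup n) ^ n = 1 := by
  have : (r (-1) : DihedralGroup n) = (r 1)⁻¹ := by
    apply eq_inv_of_mul_eq_one_left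
    simp
  rw [this, inv_pow, h, inv_one]

theorem drep_liftable (x y : B) (hxy : x ≠ y) (hall : ∀ b : B, b = x ∨ b = y) :
    M.IsLiftable (drep M x y) := by
  intro i i'
  have hyx : y ≠ x := fun h => hxy h.symm
  have hdx : drep M x y x = sr 0 := by simp [drep]
  have hdy : drep M x y y = sr 1 := by simp [drep, hyx]
  rcases hall i with h | h <;> rcases hall i' with h' | h' <;> rw [h, h']
  · simp [hdx, M.diagonal]
  · rw [hdx, hdy, sr_mul_sr, sub_zero, r_one_pow, ZMod.natCast_self, one_def]
  · rw [hdx, hdy, sr_mul_sr, M.symmetric y x]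
    have h0 : ((0 : ZMod (M x y)) - 1) = -1 := by ring
    rw [h0]
    apply r_neg_one_pow_eq_one
    rw [r_one_pow, ZMod.natCast_self, one_def]
  · simp [hdy, M.diagonal]

/-- The representation of the dihedral Coxeter group onto the abstract dihedral group. -/
noncomputable def psi (x y : B) (hxy : x ≠ y) (hall : ∀ b : B, b = x ∨ b = y) :
    W →* DihedralGroup (M x y) := cs.lift ⟨drep M x y, drep_liftable x y hxy hall⟩

theorem psi_simple_x (x y : B) (hxy : x ≠ y) (hall : ∀ b : B, b = x ∨ b = y) :
    psi cs x y hxy hall (cs.simple x) = sr 0 := by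
  unfold psi
  rw [CoxeterSystem.lift_apply_simple]
  simp [drep]

theorem psi_simple_y (x y : B) (hxy : x ≠ y) (hall : ∀ b : B, b = x ∨ b = y) :
    psi cs x y hxy hall (cs.simple y) = sr 1 := by
  unfold psi
  rw [CoxeterSystem.lift_apply_simple]
  have hyx : y ≠ x := fun h => hxy h.symm
  simp [drep, hyx]

theorem psi_alt (x y : B) (hxy : x ≠ y) (hall : ∀ b : B, b = x ∨ b = y) (k : ℕ) :
    psi cs x y hxy hall (cs.wordProd (altW x y k)) =
      (if Even k then r ((k / 2 : ℕ) : ZMod (M x y)) else sr (-((k / 2 : ℕ) : ZMod (M x y)))) ∧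
    psi cs x y hxy hall (cs.wordProd (altW y x k)) =
      (if Even k then r (-((k / 2 : ℕ) : ZMod (M x y)))
        else sr (((k / 2 : ℕ) : ZMod (M x y)) + 1)) := by
  induction k using Nat.strong_induction_on with
  | _ k ih =>
  match k with
  | 0 => simp [altW]
  | 1 =>
    constructor
    · show psi cs x y hxy hall (cs.wordProd [x]) = _
      rw [cs.wordProd_singleton, psi_simple_x]
      norm_num
    · show psi cs x y hxy hall (cs.wordProd [y]) = _
      rw [cs.wordProd_singleton, psi_simple_y]
      norm_num
  | (k+2) =>
    obtain ⟨hX, hY⟩ := ih k (by omega)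
    have e2 : (k + 2) / 2 = k / 2 + 1 := by omega
    have hXs : cs.wordProd (altW x y (k+2)) =
        cs.simple x * (cs.simple y * cs.wordProd (altW x y k)) := by
      rw [XA_succ, XA_succ]
    have hYs : cs.wordProd (altW y x (k+2)) =
        cs.simple y * (cs.simple x * cs.wordProd (altW y x k)) := by
      rw [XA_succ, XA_succ]
    rcases Nat.even_or_odd k with he | ho
    · have he2 : Even (k + 2) := by simpa [Nat.even_add] using he
      rw [if_pos he] at hX hY
      constructor
      · rw [hXs, map_mul, map_mul, psi_simple_x cs x y hxy hall,
          psi_simple_y cs x y hxy hall, hX, if_pos he2, e2]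
        simp only [sr_mul_r, sr_mul_sr]
        congr 1
        push_cast
        ring
      · rw [hYs, map_mul, map_mul, psi_simple_x cs x y hxy hall,
          psi_simple_y cs x y hxy hall, hY, if_pos he2, e2]
        simp only [r_mul_sr, sr_mul_sr, sr_mul_r]
        congr 1
        push_cast
        ring
    · have ho2 : ¬ Even (k + 2) := by simp [Nat.even_add, Nat.not_even_iff_odd.mpr ho]
      rw [if_neg (Nat.not_even_iff_odd.mpr ho)] at hX hY
      constructor
      · rw [hXs, map_mul, map_mul, psi_simple_x cs x y hxy hall,
          psi_simple_y cs x y hxy hall, hX, if_neg ho2, e2]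
        simp only [sr_mul_sr, sr_mul_r, r_mul_sr]
        congr 1
        push_cast
        ring
      · rw [hYs, map_mul, map_mul, psi_simple_x cs x y hxy hall,
          psi_simple_y cs x y hxy hall, hY, if_neg ho2, e2]
        simp only [sr_mul_sr, sr_mul_r, r_mul_sr]
        congr 1
        push_cast
        ring

theorem neF1 (x y : B) (hxy : x ≠ y) (hall : ∀ b : B, b = x ∨ b = y) (k : ℕ) (hk : 0 < k) (hm : M x y = 0 ∨ k < M x y) :
    cs.wordProd (altW x y k) ≠ cs.wordProd (altW y x k) := by
  intro h
  have hc := congrArg (psi cs x y hxy hall) h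
  rw [(psi_alt cs x y hxy hall k).1, (psi_alt cs x y hxy hall k).2] at hc
  rcases Nat.even_or_odd k with he | ho
  · rw [if_pos he, if_pos he] at hc
    simp only [r.injEq] at hc
    apply zmodCast_ne (M x y) k hk hm
    have hk2 : k / 2 + k / 2 = k := by
      rcases he with ⟨a, rfl⟩; omega
    calc ((k : ℕ) : ZMod (M x y)) = ((k / 2 + k / 2 : ℕ) : ZMod (M x y)) := by rw [hk2]
    _ = 0 := by push_cast; linear_combination hc
  · rw [if_neg (Nat.not_even_iff_odd.mpr ho), if_neg (Nat.not_even_iff_odd.mpr ho)] at hc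
    simp only [sr.injEq] at hc
    apply zmodCast_ne (M x y) k hk hm
    have hk2 : k / 2 + k / 2 + 1 = k := by
      rcases ho with ⟨a, rfl⟩; omega
    calc ((k : ℕ) : ZMod (M x y)) = ((k / 2 + k / 2 + 1 : ℕ) : ZMod (M x y)) := by rw [hk2]
    _ = 0 := by push_cast; linear_combination -hc

theorem neF2 (x y : B) (hxy : x ≠ y) (hall : ∀ b : B, b = x ∨ b = y) (k : ℕ) (hm : M x y = 0 ∨ k + 2 ≤ M x y) :
    cs.wordProd (altW x y (k + 2)) ≠ cs.wordProd (altW x y k) := by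
  intro h
  have h1 : M x y ≠ 1 := M.off_diagonal x y hxy
  have hc := congrArg (psi cs x y hxy hall) h
  rw [(psi_alt cs x y hxy hall (k+2)).1, (psi_alt cs x y hxy hall k).1] at hc
  have e2 : (k + 2) / 2 = k / 2 + 1 := by omega
  apply zmodCast_ne (M x y) 1 one_pos (by omega)
  rcases Nat.even_or_odd k with he | ho
  · have he2 : Even (k + 2) := by simpa [Nat.even_add] using he
    rw [if_pos he, if_pos he2, e2] at hc
    simp only [r.injEq] at hc
    push_cast at hc ⊢
    linear_combination hc
  · have ho2 : ¬ Even (k + 2) := by simp [Nat.even_add, Nat.not_even_iff_odd.mpr ho]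
    rw [if_neg (Nat.not_even_iff_odd.mpr ho), if_neg ho2, e2] at hc
    simp only [sr.injEq] at hc
    push_cast at hc ⊢
    linear_combination -hc

theorem neF3 (x y : B) (hxy : x ≠ y) (hall : ∀ b : B, b = x ∨ b = y) (k : ℕ) (hm : M x y = 0 ∨ k + 2 ≤ M x y) :
    cs.wordProd (altW x y (k + 2)) ≠ cs.wordProd (altW y x k) := by
  intro h
  have hc := congrArg (psi cs x y hxy hall) h
  rw [(psi_alt cs x y hxy hall (k+2)).1, (psi_alt cs x y hxy hall k).2] at hc
  have e2 : (k + 2) / 2 = k / 2 + 1 := by omega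
  apply zmodCast_ne (M x y) (k + 1) (by omega) (by omega)
  rcases Nat.even_or_odd k with he | ho
  · have he2 : Even (k + 2) := by simpa [Nat.even_add] using he
    rw [if_pos he, if_pos he2, e2] at hc
    simp only [r.injEq] at hc
    have hk2 : k / 2 + k / 2 = k := by rcases he with ⟨a, rfl⟩; omega
    calc ((k + 1 : ℕ) : ZMod (M x y)) = ((k / 2 + k / 2 + 1 : ℕ) : ZMod (M x y)) := by rw [hk2]
    _ = 0 := by push_cast at hc ⊢; linear_combination hc
  · have ho2 : ¬ Even (k + 2) := by simp [Nat.even_add, Nat.not_even_iff_odd.mpr ho]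
    rw [if_neg (Nat.not_even_iff_odd.mpr ho), if_neg ho2, e2] at hc
    simp only [sr.injEq] at hc
    have hk2 : k / 2 + k / 2 + 1 = k := by rcases ho with ⟨a, rfl⟩; omega
    calc ((k + 1 : ℕ) : ZMod (M x y)) = ((k / 2 + k / 2 + 1 + 1 : ℕ) : ZMod (M x y)) := by
          rw [hk2]
    _ = 0 := by push_cast at hc ⊢; linear_combination -hc

end Rep


section Classify

theorem master (x y : B) (hxy : x ≠ y) (hall : ∀ b : B, b = x ∨ b = y) : ∀ k : ℕ,
    (∀ w : W, cs.length w = k → (M x y = 0 ∨ k ≤ M x y) ∧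
      (w = cs.wordProd (altW x y k) ∨ w = cs.wordProd (altW y x k))) ∧
    ((M x y = 0 ∨ k ≤ M x y) →
      cs.length (cs.wordProd (altW x y k)) = k ∧
      cs.length (cs.wordProd (altW y x k)) = k) := by
  have hallY : ∀ b : B, b = y ∨ b = x := fun b => (hall b).symm
  have hMyx : M y x = M x y := M.symmetric y x
  have hne1 : M x y ≠ 1 := M.off_diagonal x y hxy
  intro k
  induction k using Nat.strong_induction_on with
  | _ k ih =>
  rcases k with _ | k
  · constructor
    · intro w hw
      have hw1 : w = 1 := cs.length_eq_zero_iff.mp hw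
      exact ⟨Or.inr (Nat.zero_le _), Or.inl (by simp [hw1, altW])⟩
    · intro _
      constructor <;> simp [altW]
  · have ihk := ih k (Nat.lt_succ_self k)
    have hlen : (M x y = 0 ∨ k + 1 ≤ M x y) →
        cs.length (cs.wordProd (altW x y (k + 1))) = k + 1 ∧
        cs.length (cs.wordProd (altW y x (k + 1))) = k + 1 := by
      intro hb
      have hbk : M x y = 0 ∨ k ≤ M x y := by omega
      obtain ⟨hX, hY⟩ := ihk.2 hbk
      constructor
      · rw [XA_succ]
        rcases cs.length_simple_mul (cs.wordProd (altW y x k)) x with h | h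
        · rw [hY] at h; exact h
        · exfalso
          rw [hY, ← XA_succ] at h
          rcases k with _ | j
          · simp [altW] at h
          · have hcl := (ih j (by omega)).1 (cs.wordProd (altW x y (j + 1 + 1))) (by omega)
            rcases hcl.2 with hc | hc
            · exact neF2 cs x y hxy hall j (by omega) hc
            · exact neF3 cs x y hxy hall j (by omega) hc
      · rw [XA_succ]
        rcases cs.length_simple_mul (cs.wordProd (altW x y k)) y with h | h
        · rw [hX] at h; exact h
        · exfalso
          rw [hX, ← XA_succ] at h
          rcases k with _ | j
          · simp [altW] at h
          · have hcl := (ih j (by omega)).1 (cs.wordProd (altW y x (j + 1 + 1))) (by omega)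
            rcases hcl.2 with hc | hc
            · exact neF3 cs y x hxy.symm hallY j (by rw [hMyx]; omega) hc
            · exact neF2 cs y x hxy.symm hallY j (by rw [hMyx]; omega) hc
    refine ⟨?_, hlen⟩
    intro w hw
    have hw1 : w ≠ 1 := by
      intro h
      rw [h, cs.length_one] at hw
      omega
    obtain ⟨i, hi⟩ := cs.exists_leftDescent_of_ne_one hw1
    have hlsi : cs.length (cs.simple i * w) = k := by
      unfold CoxeterSystem.IsLeftDescent at hi
      rcases cs.length_simple_mul w i with h | h
      · omega
      · omega
    obtain ⟨hbk, hcls⟩ := (ih k (Nat.lt_succ_self k)).1 (cs.simple i * w) hlsi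
    have hww : w = cs.simple i * (cs.simple i * w) :=
      (cs.simple_mul_simple_cancel_left i).symm
    rcases hall i with hix | hix <;> rw [hix] at hww hcls
    · rcases hcls with hc | hc
      · rcases k with _ | j
        · have hws : w = cs.simple x := by
            rw [hww, hc]
            simp [altW]
          refine ⟨by omega, Or.inl ?_⟩
          rw [hws]
          simp [altW]
        · exfalso
          have hwY : w = cs.wordProd (altW y x j) := by
            rw [XA_succ] at hc
            rw [hww, hc, cs.simple_mul_simple_cancel_left]
          have hlj : cs.length (cs.wordProd (altW y x j)) = j :=
            ((ih j (by omega)).2 (by omega)).2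
          rw [hwY, hlj] at hw
          omega
      · have hwX : w = cs.wordProd (altW x y (k + 1)) := by
          rw [hww, hc, ← XA_succ]
        refine ⟨?_, Or.inl hwX⟩
        by_contra hnb
        have hm0 : M x y ≠ 0 := fun h => hnb (Or.inl h)
        have hkm : k = M x y := by omega
        obtain ⟨j, rfl⟩ : ∃ j, k = j + 1 := ⟨k - 1, by omega⟩
        have htop : cs.wordProd (altW y x (j + 1)) = cs.wordProd (altW x y (j + 1)) := by
          have h2 := X_eq_Y_top cs x y
          rw [← hkm] at h2
          exact h2.symm
        have hwY : w = cs.wordProd (altW y x j) := by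
          rw [hwX, XA_succ, htop, XA_succ, cs.simple_mul_simple_cancel_left]
        have hlj : cs.length (cs.wordProd (altW y x j)) = j :=
          ((ih j (by omega)).2 (by omega)).2
        rw [hwY, hlj] at hw
        omega
    · rcases hcls with hc | hc
      · have hwY : w = cs.wordProd (altW y x (k + 1)) := by
          rw [hww, hc, ← XA_succ]
        refine ⟨?_, Or.inr hwY⟩
        by_contra hnb
        have hm0 : M x y ≠ 0 := fun h => hnb (Or.inl h)
        have hkm : k = M x y := by omega
        obtain ⟨j, rfl⟩ : ∃ j, k = j + 1 := ⟨k - 1, by omega⟩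
        have htop : cs.wordProd (altW x y (j + 1)) = cs.wordProd (altW y x (j + 1)) := by
          have h2 := X_eq_Y_top cs x y
          rw [← hkm] at h2
          exact h2
        have hwX : w = cs.wordProd (altW x y j) := by
          rw [hwY, XA_succ, htop, XA_succ, cs.simple_mul_simple_cancel_left]
        have hlj : cs.length (cs.wordProd (altW x y j)) = j :=
          ((ih j (by omega)).2 (by omega)).1
        rw [hwX, hlj] at hw
        omega
      · rcases k with _ | j
        · have hws : w = cs.simple y := by
            rw [hww, hc]
            simp [altW]
          refine ⟨by omega, Or.inr ?_⟩
          rw [hws]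
          simp [altW]
        · exfalso
          have hwX : w = cs.wordProd (altW x y j) := by
            rw [XA_succ] at hc
            rw [hww, hc, cs.simple_mul_simple_cancel_left]
          have hlj : cs.length (cs.wordProd (altW x y j)) = j :=
            ((ih j (by omega)).2 (by omega)).1
          rw [hwX, hlj] at hw
          omega

theorem lenX (x y : B) (hxy : x ≠ y) (hall : ∀ b : B, b = x ∨ b = y) {k : ℕ} (hb : M x y = 0 ∨ k ≤ M x y) :
    cs.length (cs.wordProd (altW x y k)) = k :=
  ((master cs x y hxy hall k).2 hb).1

theorem lenY (x y : B) (hxy : x ≠ y) (hall : ∀ b : B, b = x ∨ b = y) {k : ℕ} (hb : M x y = 0 ∨ k ≤ M x y) :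
    cs.length (cs.wordProd (altW y x k)) = k :=
  ((master cs x y hxy hall k).2 hb).2

theorem classify (x y : B) (hxy : x ≠ y) (hall : ∀ b : B, b = x ∨ b = y) (w : W) : (M x y = 0 ∨ cs.length w ≤ M x y) ∧
    (w = cs.wordProd (altW x y (cs.length w)) ∨ w = cs.wordProd (altW y x (cs.length w))) :=
  (master cs x y hxy hall (cs.length w)).1 w rfl

theorem isRefl_alt_odd (x y : B) : ∀ a : ℕ,
    cs.IsReflection (cs.wordProd (altW x y (2 * a + 1))) ∧
    cs.IsReflection (cs.wordProd (altW y x (2 * a + 1))) := by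
  intro a
  induction a with
  | zero =>
    constructor
    · show cs.IsReflection (cs.wordProd [x])
      rw [cs.wordProd_singleton]
      exact cs.isReflection_simple x
    · show cs.IsReflection (cs.wordProd [y])
      rw [cs.wordProd_singleton]
      exact cs.isReflection_simple y
  | succ a ih =>
    have hodd : ¬ Even (2 * a + 1) := by simp [Nat.even_add_one, parity_simps]
    have hidX : cs.wordProd (altW x y (2 * (a + 1) + 1)) =
        cs.simple x * cs.wordProd (altW y x (2 * a + 1)) * cs.simple x := by
      have e1 : 2 * (a + 1) + 1 = (2 * a + 1) + 1 + 1 := by ring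
      rw [e1, XA_succ, XA_concat cs y x (2 * a + 1), if_neg hodd, mul_assoc]
    have hidY : cs.wordProd (altW y x (2 * (a + 1) + 1)) =
        cs.simple y * cs.wordProd (altW x y (2 * a + 1)) * cs.simple y := by
      have e1 : 2 * (a + 1) + 1 = (2 * a + 1) + 1 + 1 := by ring
      rw [e1, XA_succ, XA_concat cs x y (2 * a + 1), if_neg hodd, mul_assoc]
    constructor
    · rw [hidX]
      have h2 := ih.2.conj (cs.simple x)
      rwa [cs.inv_simple] at h2
    · rw [hidY]
      have h2 := ih.1.conj (cs.simple y)
      rwa [cs.inv_simple] at h2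

theorem refl_of_odd (x y : B) (hxy : x ≠ y) (hall : ∀ b : B, b = x ∨ b = y) (w : W) (h : Odd (cs.length w)) : cs.IsReflection w := by
  obtain ⟨a, ha⟩ := h
  rcases (classify cs x y hxy hall w).2 with hc | hc
  · rw [hc, ha]
    exact (isRefl_alt_odd cs x y a).1
  · rw [hc, ha]
    exact (isRefl_alt_odd cs x y a).2

theorem bstep (x y : B) (hxy : x ≠ y) (hall : ∀ b : B, b = x ∨ b = y) (u v : W) (h : cs.length v = cs.length u + 1) : bruhatLE cs u v := by
  apply Relation.ReflTransGen.single
  refine ⟨u⁻¹ * v, ?_, (mul_inv_cancel_left u v).symm, by omega⟩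
  apply refl_of_odd cs x y hxy hall
  have hp := cs.length_mul_mod_two u⁻¹ v
  rw [cs.length_inv] at hp
  rw [Nat.odd_iff]
  omega

theorem ble_chain (x y : B) (hxy : x ≠ y) (hall : ∀ b : B, b = x ∨ b = y) : ∀ n : ℕ, ∀ u v : W, cs.length u + n + 1 = cs.length v →
    bruhatLE cs u v := by
  intro n
  induction n with
  | zero =>
    intro u v h
    exact bstep cs x y hxy hall u v (by omega)
  | succ n ih =>
    intro u v h
    have hbv := (classify cs x y hxy hall v).1
    have hz : cs.length (cs.wordProd (altW x y (cs.length u + 1))) = cs.length u + 1 :=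
      lenX cs x y hxy hall (by omega)
    exact Relation.ReflTransGen.trans
      (bstep cs x y hxy hall u _ hz)
      (ih _ v (by omega))

theorem ble_len {u v : W} (h : bruhatLE cs u v) :
    u = v ∨ cs.length u < cs.length v := by
  induction h with
  | refl => exact Or.inl rfl
  | tail _ hbc ihh =>
    obtain ⟨t, _, _, hlt⟩ := hbc
    rcases ihh with rfl | hl
    · exact Or.inr hlt
    · exact Or.inr (hl.trans hlt)

theorem bcov_iff (x y : B) (hxy : x ≠ y) (hall : ∀ b : B, b = x ∨ b = y) (u v : W) : bCov cs u v ↔ cs.length v = cs.length u + 1 := by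
  constructor
  · rintro ⟨hle, hne, hmid⟩
    rcases ble_len cs hle with rfl | hlt
    · exact absurd rfl hne
    by_contra hne2
    have hbv := (classify cs x y hxy hall v).1
    have hz : cs.length (cs.wordProd (altW x y (cs.length u + 1))) = cs.length u + 1 :=
      lenX cs x y hxy hall (by omega)
    have h2 : bruhatLE cs u (cs.wordProd (altW x y (cs.length u + 1))) :=
      bstep cs x y hxy hall u _ hz
    have h3 : bruhatLE cs (cs.wordProd (altW x y (cs.length u + 1))) v :=
      ble_chain cs x y hxy hall (cs.length v - cs.length u - 2) _ v (by omega)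
    rcases hmid _ h2 h3 with h4 | h4 <;> (rw [h4] at hz; omega)
  · intro h
    refine ⟨bstep cs x y hxy hall u v h, ?_, ?_⟩
    · intro he
      rw [he] at h
      omega
    · intro z h1 h2
      rcases ble_len cs h1 with rfl | hl1
      · exact Or.inl rfl
      rcases ble_len cs h2 with rfl | hl2
      · exact Or.inr rfl
      omega

end Classify


section Matching

variable (φ : BSM cs)

theorem memdom (hdom : φ.dom = Set.univ) (w : W) : w ∈ φ.dom := by
  rw [hdom]; trivial

theorem finvol (hdom : φ.dom = Set.univ) (w : W) : φ.toFun (φ.toFun w) = w :=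
  φ.invol w (memdom cs φ hdom w)

theorem finj (hdom : φ.dom = Set.univ) {a b : W} (h : φ.toFun a = φ.toFun b) : a = b := by
  have h2 := congrArg φ.toFun h
  rwa [finvol cs φ hdom a, finvol cs φ hdom b] at h2

theorem fud (x y : B) (hxy : x ≠ y) (hall : ∀ b : B, b = x ∨ b = y)
    (hdom : φ.dom = Set.univ) (w : W) :
    cs.length (φ.toFun w) = cs.length w + 1 ∨
    cs.length w = cs.length (φ.toFun w) + 1 := by
  rcases φ.cov w (memdom cs φ hdom w) with h | h
  · exact Or.inr ((bcov_iff cs x y hxy hall _ _).mp h)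
  · exact Or.inl ((bcov_iff cs x y hxy hall _ _).mp h)

theorem struct (x y : B) (hxy : x ≠ y) (hall : ∀ b : B, b = x ∨ b = y)
    (hdom : φ.dom = Set.univ) :
    ∀ k : ℕ, 1 ≤ k → (M x y = 0 ∨ k < M x y) →
    (¬ (cs.length (φ.toFun (cs.wordProd (altW x y k))) = k + 1 ∧
        cs.length (φ.toFun (cs.wordProd (altW y x k))) = k + 1)) ∧
    (¬ (cs.length (φ.toFun (cs.wordProd (altW x y k))) + 1 = k ∧
        cs.length (φ.toFun (cs.wordProd (altW y x k))) + 1 = k)) := by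
  intro k
  induction k using Nat.strong_induction_on with
  | _ k ih =>
  intro hk1 hbs
  rcases k with _ | k
  · omega
  rcases k with _ | k
  · -- base level 1
    simp only [Nat.zero_add] at hbs ⊢
    constructor
    · rintro ⟨hX, hY⟩
      have h1 : cs.length (φ.toFun 1) = 1 := by
        rcases fud cs φ x y hxy hall hdom 1 with h | h
        · rwa [cs.length_one] at h
        · rw [cs.length_one] at h
          omega
      rcases ((master cs x y hxy hall 1).1 (φ.toFun 1) h1).2 with hc | hc
      · have h2 : φ.toFun (cs.wordProd (altW x y 1)) = 1 := by
          rw [← hc, finvol cs φ hdom]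
        rw [h2, cs.length_one] at hX
        omega
      · have h2 : φ.toFun (cs.wordProd (altW y x 1)) = 1 := by
          rw [← hc, finvol cs φ hdom]
        rw [h2, cs.length_one] at hY
        omega
    · rintro ⟨hX, hY⟩
      have h2 : φ.toFun (cs.wordProd (altW x y 1)) = 1 :=
        cs.length_eq_zero_iff.mp (by omega)
      have h3 : φ.toFun (cs.wordProd (altW y x 1)) = 1 :=
        cs.length_eq_zero_iff.mp (by omega)
      have h4 : cs.wordProd (altW x y 1) = cs.wordProd (altW y x 1) :=
        finj cs φ hdom (h2.trans h3.symm)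
      exact neF1 cs x y hxy hall 1 one_pos (by omega) h4
  · -- inductive step, level k+2 from level k+1
    simp only [show k + 1 + 1 = k + 2 from rfl] at hbs ⊢
    have ihs := ih (k + 1) (by omega) (by omega) (by omega)
    have hbk1 : M x y = 0 ∨ k + 1 ≤ M x y := by omega
    have hbk2 : M x y = 0 ∨ k + 2 ≤ M x y := by omega
    have hXl : cs.length (cs.wordProd (altW x y (k + 1))) = k + 1 :=
      lenX cs x y hxy hall hbk1
    have hYl : cs.length (cs.wordProd (altW y x (k + 1))) = k + 1 :=
      lenY cs x y hxy hall hbk1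
    have hXl2 : cs.length (cs.wordProd (altW x y (k + 2))) = k + 2 :=
      lenX cs x y hxy hall hbk2
    have hYl2 : cs.length (cs.wordProd (altW y x (k + 2))) = k + 2 :=
      lenY cs x y hxy hall hbk2
    have hne : cs.wordProd (altW x y (k + 2)) ≠ cs.wordProd (altW y x (k + 2)) :=
      neF1 cs x y hxy hall (k + 2) (by omega) (by omega)
    constructor
    · rintro ⟨hX, hY⟩
      have key : ∀ u : W, cs.length u = k + 1 → cs.length (φ.toFun u) = k + 2 → False := by
        intro u hu hfu
        rcases ((master cs x y hxy hall (k + 2)).1 (φ.toFun u) hfu).2 with hc | hc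
        · have h2 : φ.toFun (cs.wordProd (altW x y (k + 2))) = u := by
            rw [← hc, finvol cs φ hdom]
          rw [h2, hu] at hX
          omega
        · have h2 : φ.toFun (cs.wordProd (altW y x (k + 2))) = u := by
            rw [← hc, finvol cs φ hdom]
          rw [h2, hu] at hY
          omega
      rcases fud cs φ x y hxy hall hdom (cs.wordProd (altW x y (k + 1))) with h | h
      · exact key _ hXl (by omega)
      · rcases fud cs φ x y hxy hall hdom (cs.wordProd (altW y x (k + 1))) with h2 | h2
        · exact key _ hYl (by omega)
        · exact ihs.2 ⟨by omega, by omega⟩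
    · rintro ⟨hX, hY⟩
      have hfX : cs.length (φ.toFun (cs.wordProd (altW x y (k + 2)))) = k + 1 := by omega
      have hfY : cs.length (φ.toFun (cs.wordProd (altW y x (k + 2)))) = k + 1 := by omega
      rcases ((master cs x y hxy hall (k + 1)).1 _ hfX).2 with hc1 | hc1 <;>
        rcases ((master cs x y hxy hall (k + 1)).1 _ hfY).2 with hc2 | hc2
      · exact hne (finj cs φ hdom (hc1.trans hc2.symm))
      · apply ihs.1
        constructor
        · have h2 : φ.toFun (cs.wordProd (altW x y (k + 1))) =
              cs.wordProd (altW x y (k + 2)) := by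
            rw [← hc1, finvol cs φ hdom]
          rw [h2, hXl2]
        · have h2 : φ.toFun (cs.wordProd (altW y x (k + 1))) =
              cs.wordProd (altW y x (k + 2)) := by
            rw [← hc2, finvol cs φ hdom]
          rw [h2, hYl2]
      · apply ihs.1
        constructor
        · have h2 : φ.toFun (cs.wordProd (altW x y (k + 1))) =
              cs.wordProd (altW y x (k + 2)) := by
            rw [← hc2, finvol cs φ hdom]
          rw [h2, hYl2]
        · have h2 : φ.toFun (cs.wordProd (altW y x (k + 1))) =
              cs.wordProd (altW x y (k + 2)) := by
            rw [← hc1, finvol cs φ hdom]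
          rw [h2, hXl2]
      · exact hne (finj cs φ hdom (hc1.trans hc2.symm))

theorem core (x y : B) (hxy : x ≠ y) (hall : ∀ b : B, b = x ∨ b = y)
    (hdom : φ.dom = Set.univ)
    (H : ∀ j : ℕ, (M x y = 0 ∨ j + 3 ≤ M x y) →
      φ.toFun (cs.wordProd (altW y x j)) = cs.wordProd (altW y x (j + 1)) →
      φ.toFun (cs.wordProd (altW x y (j + 1))) = cs.wordProd (altW x y (j + 2))) :
    ∀ k : ℕ, 1 ≤ k → (M x y = 0 ∨ k + 2 ≤ M x y) →
      φ.toFun (cs.wordProd (altW x y k)) ≠ cs.wordProd (altW y x (k + 1)) := by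
  intro k
  induction k using Nat.strong_induction_on with
  | _ k ih =>
  intro hk1 hb hf
  have hbk : M x y = 0 ∨ k ≤ M x y := by omega
  have hYdown : cs.length (φ.toFun (cs.wordProd (altW y x k))) + 1 = k := by
    rcases fud cs φ x y hxy hall hdom (cs.wordProd (altW y x k)) with h | h
    · exfalso
      rw [lenY cs x y hxy hall hbk] at h
      apply (struct cs φ x y hxy hall hdom k hk1 (by omega)).1
      refine ⟨?_, h⟩
      rw [hf, lenY cs x y hxy hall (by omega)]
    · rw [lenY cs x y hxy hall hbk] at h
      omega
  obtain ⟨j, rfl⟩ : ∃ j, k = j + 1 := ⟨k - 1, by omega⟩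
  rcases ((master cs x y hxy hall j).1 (φ.toFun (cs.wordProd (altW y x (j + 1))))
      (by omega)).2 with hc | hc
  · rcases Nat.eq_zero_or_pos j with rfl | hj1
    · have hfY0 : φ.toFun (cs.wordProd (altW y x 0)) = cs.wordProd (altW y x 1) := by
        have h2 : φ.toFun (cs.wordProd (altW x y 0)) = cs.wordProd (altW y x (0 + 1)) := by
          rw [← hc, finvol cs φ hdom]
        exact h2
      have h3 := H 0 (by omega) hfY0
      rw [h3] at hf
      exact neF1 cs x y hxy hall 2 (by omega) (by omega) hf
    · have hfX : φ.toFun (cs.wordProd (altW x y j)) = cs.wordProd (altW y x (j + 1)) := by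
        rw [← hc, finvol cs φ hdom]
      exact ih j (by omega) hj1 (by omega) hfX
  · have hfY : φ.toFun (cs.wordProd (altW y x j)) = cs.wordProd (altW y x (j + 1)) := by
      rw [← hc, finvol cs φ hdom]
    have h3 := H j (by omega) hfY
    rw [h3] at hf
    exact neF1 cs x y hxy hall (j + 2) (by omega) (by omega) hf

theorem mainUpX (x y : B) (hxy : x ≠ y) (hall : ∀ b : B, b = x ∨ b = y)
    (hdom : φ.dom = Set.univ)
    (H : ∀ j : ℕ, (M x y = 0 ∨ j + 3 ≤ M x y) →
      φ.toFun (cs.wordProd (altW y x j)) = cs.wordProd (altW y x (j + 1)) →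
      φ.toFun (cs.wordProd (altW x y (j + 1))) = cs.wordProd (altW x y (j + 2)))
    (j : ℕ) (hbf : M x y = 0 ∨ j + 2 ≤ M x y)
    (hvY : φ.toFun (cs.wordProd (altW y x (j + 1))) = cs.wordProd (altW y x j)) :
    φ.toFun (cs.simple x * cs.wordProd (altW x y (j + 1))) =
      cs.simple x * φ.toFun (cs.wordProd (altW x y (j + 1))) := by
  have hfY : φ.toFun (cs.wordProd (altW y x j)) = cs.wordProd (altW y x (j + 1)) := by
    rw [← hvY, finvol cs φ hdom]
  have eL : cs.simple x * cs.wordProd (altW x y (j + 1)) = cs.wordProd (altW y x j) := by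
    rw [XA_succ, cs.simple_mul_simple_cancel_left]
  have hgoal : φ.toFun (cs.wordProd (altW x y (j + 1))) = cs.wordProd (altW x y (j + 2)) := by
    have hYd : cs.length (φ.toFun (cs.wordProd (altW y x (j + 1)))) + 1 = j + 1 := by
      rw [hvY, lenY cs x y hxy hall (by omega)]
    have hXup : cs.length (φ.toFun (cs.wordProd (altW x y (j + 1)))) = j + 2 := by
      rcases fud cs φ x y hxy hall hdom (cs.wordProd (altW x y (j + 1))) with h | h
      · rw [lenX cs x y hxy hall (by omega)] at h
        exact h
      · exfalso
        rw [lenX cs x y hxy hall (by omega)] at h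
        exact (struct cs φ x y hxy hall hdom (j + 1) (by omega) (by omega)).2
          ⟨by omega, hYd⟩
    rcases ((master cs x y hxy hall (j + 2)).1 _ hXup).2 with hcc | hcc
    · exact hcc
    · by_cases hm : M x y = 0 ∨ j + 3 ≤ M x y
      · exact absurd hcc (core cs φ x y hxy hall hdom H (j + 1) (by omega) (by omega))
      · have he : M x y = j + 2 := by omega
        have htop := X_eq_Y_top cs x y
        rw [he] at htop
        rw [hcc, ← htop]
  rw [eL, hfY, hgoal]
  have e2 : cs.wordProd (altW x y (j + 2)) = cs.simple x * cs.wordProd (altW y x (j + 1)) :=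
    XA_succ cs x y (j + 1)
  rw [e2, cs.simple_mul_simple_cancel_left]

theorem mainUpY (x y : B) (hxy : x ≠ y) (hall : ∀ b : B, b = x ∨ b = y)
    (hdom : φ.dom = Set.univ)
    (H : ∀ j : ℕ, (M x y = 0 ∨ j + 3 ≤ M x y) →
      φ.toFun (cs.wordProd (altW y x j)) = cs.wordProd (altW y x (j + 1)) →
      φ.toFun (cs.wordProd (altW x y (j + 1))) = cs.wordProd (altW x y (j + 2)))
    (k : ℕ) (hb1 : M x y = 0 ∨ k + 1 ≤ M x y)
    (hcase : φ.toFun (cs.wordProd (altW y x k)) = cs.wordProd (altW x y (k + 1)) ∨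
      φ.toFun (cs.wordProd (altW y x k)) = cs.wordProd (altW y x (k + 1))) :
    φ.toFun (cs.simple x * cs.wordProd (altW y x k)) =
      cs.simple x * φ.toFun (cs.wordProd (altW y x k)) := by
  have e1 : cs.simple x * cs.wordProd (altW y x k) = cs.wordProd (altW x y (k + 1)) :=
    (XA_succ cs x y k).symm
  rcases hcase with hc | hc
  · have eL : φ.toFun (cs.wordProd (altW x y (k + 1))) = cs.wordProd (altW y x k) := by
      rw [← hc, finvol cs φ hdom]
    rw [e1, eL, hc, XA_succ, cs.simple_mul_simple_cancel_left]
  · have e2 : cs.simple x * cs.wordProd (altW y x (k + 1)) = cs.wordProd (altW x y (k + 2)) :=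
      (XA_succ cs x y (k + 1)).symm
    rw [e1, hc, e2]
    by_cases hm3 : M x y = 0 ∨ k + 3 ≤ M x y
    · exact H k hm3 hc
    · rcases (by omega : M x y = k + 1 ∨ M x y = k + 2) with he | he
      · have htop : cs.wordProd (altW x y (k + 1)) = cs.wordProd (altW y x (k + 1)) := by
          have h2 := X_eq_Y_top cs x y
          rwa [he] at h2
        have hfX : φ.toFun (cs.wordProd (altW x y (k + 1))) = cs.wordProd (altW y x k) := by
          rw [htop, ← hc, finvol cs φ hdom]
        rw [hfX]
        have h3 : cs.wordProd (altW x y (k + 2)) = cs.wordProd (altW y x k) := by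
          rw [← e2, ← htop, XA_succ, cs.simple_mul_simple_cancel_left]
        rw [h3]
      · have hYd : cs.length (φ.toFun (cs.wordProd (altW y x (k + 1)))) + 1 = k + 1 := by
          rw [show φ.toFun (cs.wordProd (altW y x (k + 1))) = cs.wordProd (altW y x k) from by
            rw [← hc, finvol cs φ hdom], lenY cs x y hxy hall (by omega)]
        have hXup : cs.length (φ.toFun (cs.wordProd (altW x y (k + 1)))) = k + 2 := by
          rcases fud cs φ x y hxy hall hdom (cs.wordProd (altW x y (k + 1))) with h | h
          · rw [lenX cs x y hxy hall (by omega)] at h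
            exact h
          · exfalso
            rw [lenX cs x y hxy hall (by omega)] at h
            exact (struct cs φ x y hxy hall hdom (k + 1) (by omega) (by omega)).2
              ⟨by omega, hYd⟩
        rcases ((master cs x y hxy hall (k + 2)).1 _ hXup).2 with hcc | hcc
        · exact hcc
        · have htop : cs.wordProd (altW x y (k + 2)) = cs.wordProd (altW y x (k + 2)) := by
            have h2 := X_eq_Y_top cs x y
            rwa [he] at h2
          rw [hcc, ← htop]

theorem mainUp (x y : B) (hxy : x ≠ y) (hall : ∀ b : B, b = x ∨ b = y)
    (hdom : φ.dom = Set.univ)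
    (H : ∀ j : ℕ, (M x y = 0 ∨ j + 3 ≤ M x y) →
      φ.toFun (cs.wordProd (altW y x j)) = cs.wordProd (altW y x (j + 1)) →
      φ.toFun (cs.wordProd (altW x y (j + 1))) = cs.wordProd (altW x y (j + 2)))
    (w : W) (hup : cs.length (φ.toFun w) = cs.length w + 1) :
    φ.toFun (cs.simple x * w) = cs.simple x * φ.toFun w := by
  obtain ⟨k, hk⟩ : ∃ k, cs.length w = k := ⟨_, rfl⟩
  obtain ⟨hbw, hcw⟩ := classify cs x y hxy hall w
  rw [hk] at hbw hcw hup
  have hbf := (classify cs x y hxy hall (φ.toFun w)).1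
  rw [hup] at hbf
  rcases hcw with hc | hc
  · -- w = X k
    rcases Nat.eq_zero_or_pos k with rfl | hpos
    · -- w = 1, treat as Y 0
      have hc' : w = cs.wordProd (altW y x 0) := hc
      subst hc'
      have hfw := ((master cs x y hxy hall 1).1 (φ.toFun (cs.wordProd (altW y x 0)))
        (by omega)).2
      exact mainUpY cs φ x y hxy hall hdom H 0 (by omega) hfw
    · obtain ⟨j, rfl⟩ : ∃ j, k = j + 1 := ⟨k - 1, by omega⟩
      subst hc
      have hYd : cs.length (φ.toFun (cs.wordProd (altW y x (j + 1)))) + 1 = j + 1 := by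
        rcases fud cs φ x y hxy hall hdom (cs.wordProd (altW y x (j + 1))) with h | h
        · exfalso
          rw [lenY cs x y hxy hall (by omega)] at h
          exact (struct cs φ x y hxy hall hdom (j + 1) (by omega) (by omega)).1
            ⟨hup, h⟩
        · rw [lenY cs x y hxy hall (by omega)] at h
          omega
      rcases ((master cs x y hxy hall j).1 (φ.toFun (cs.wordProd (altW y x (j + 1))))
          (by omega)).2 with hv | hv
      · rcases Nat.eq_zero_or_pos j with rfl | hj1
        · exact mainUpX cs φ x y hxy hall hdom H 0 (by omega) hv
        · exfalso
          have hfX : φ.toFun (cs.wordProd (altW x y j)) = cs.wordProd (altW y x (j + 1)) := by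
            rw [← hv, finvol cs φ hdom]
          exact core cs φ x y hxy hall hdom H j (by omega) (by omega) hfX
      · exact mainUpX cs φ x y hxy hall hdom H j (by omega) hv
  · -- w = Y k
    subst hc
    have hfw := ((master cs x y hxy hall (k + 1)).1 (φ.toFun (cs.wordProd (altW y x k)))
      (by omega)).2
    exact mainUpY cs φ x y hxy hall hdom H k (by omega) hfw

theorem mainreg (x y : B) (hxy : x ≠ y) (hall : ∀ b : B, b = x ∨ b = y)
    (hdom : φ.dom = Set.univ)
    (H : ∀ j : ℕ, (M x y = 0 ∨ j + 3 ≤ M x y) →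
      φ.toFun (cs.wordProd (altW y x j)) = cs.wordProd (altW y x (j + 1)) →
      φ.toFun (cs.wordProd (altW x y (j + 1))) = cs.wordProd (altW x y (j + 2))) :
    ∀ z : W, φ.toFun (cs.simple x * z) = cs.simple x * φ.toFun z := by
  intro z
  rcases fud cs φ x y hxy hall hdom z with h | h
  · exact mainUp cs φ x y hxy hall hdom H z h
  · have hup : cs.length (φ.toFun (φ.toFun z)) = cs.length (φ.toFun z) + 1 := by
      rw [finvol cs φ hdom]
      exact h
    have hstep := mainUp cs φ x y hxy hall hdom H (φ.toFun z) hup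
    rw [finvol cs φ hdom] at hstep
    calc φ.toFun (cs.simple x * z) = φ.toFun (φ.toFun (cs.simple x * φ.toFun z)) := by
          rw [hstep]
    _ = cs.simple x * φ.toFun z := finvol cs φ hdom _

end Matching


end S13
/-- for a special matching `φ` of a dihedral Coxeter group `⟨x,y⟩` with
`φ(e)` a generator, `φ` fails to be left `x`-regular iff there is `j ≤ m_{xy} - 3` with
`φ(Y_j) = Y_{j+1}` and `φ(x Y_j) ≠ x Y_{j+1}`, in which case `φ(x Y_j) = Y_{j+2}`
(where `Y_j` is the alternating word of length `j` starting with `y`). -/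
theorem stmt13 {B : Type*} {W : Type*} [Group W] {M : CoxeterMatrix B}
    (cs : CoxeterSystem M W) (x y : B) (hxy : x ≠ y)
    (hall : ∀ b : B, b = x ∨ b = y)
    (φ : BSM cs) (hdom : φ.dom = Set.univ)
    (hgen : ∃ i : B, φ.toFun 1 = cs.simple i) :
    (¬ ∀ z : W, φ.toFun (cs.simple x * z) = cs.simple x * φ.toFun z) ↔
      ∃ j : ℕ, (M x y = 0 ∨ j + 3 ≤ M x y) ∧
        φ.toFun (cs.wordProd (altW y x j)) = cs.wordProd (altW y x (j + 1)) ∧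
        φ.toFun (cs.simple x * cs.wordProd (altW y x j)) ≠
          cs.simple x * cs.wordProd (altW y x (j + 1)) ∧
        φ.toFun (cs.simple x * cs.wordProd (altW y x j)) =
          cs.wordProd (altW y x (j + 2)) := by
  constructor
  · intro hne
    by_contra hno
    apply hne
    apply S13.mainreg cs φ x y hxy hall hdom
    intro j hb h1
    by_contra hC
    have hYd : cs.length (φ.toFun (cs.wordProd (altW y x (j + 1)))) + 1 = j + 1 := by
      rw [show φ.toFun (cs.wordProd (altW y x (j + 1))) = cs.wordProd (altW y x j) from by
        rw [← h1, S13.finvol cs φ hdom], S13.lenY cs x y hxy hall (by omega)]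
    have hXup : cs.length (φ.toFun (cs.wordProd (altW x y (j + 1)))) = j + 2 := by
      rcases S13.fud cs φ x y hxy hall hdom (cs.wordProd (altW x y (j + 1))) with h | h
      · rw [S13.lenX cs x y hxy hall (by omega)] at h
        exact h
      · exfalso
        rw [S13.lenX cs x y hxy hall (by omega)] at h
        exact (S13.struct cs φ x y hxy hall hdom (j + 1) (by omega) (by omega)).2
          ⟨by omega, hYd⟩
    rcases ((S13.master cs x y hxy hall (j + 2)).1 _ hXup).2 with hcc | hcc
    · exact hC hcc
    · apply hno
      refine ⟨j, hb, h1, ?_, ?_⟩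
      · rw [← S13.XA_succ, ← S13.XA_succ]
        exact fun hE => hC hE
      · rw [← S13.XA_succ]
        exact hcc
  · rintro ⟨j, hb, h1, h2, h3⟩ hreg
    apply h2
    rw [hreg (cs.wordProd (altW y x j)), h1]
end
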